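/- There exists a universal constant C > 0 such that for every integer d ≥ 2, all symmetric norms ‖·‖_X and ‖·‖_Y on ℝ^d (invariant under permutations of coordinates and sign changes) with ‖e_i‖_X = ‖e_i‖_Y = 1 for the standard basis vectors, and every natural number k ≥ 2d + ⌈log₂ d⌉ − 1, the entropy numbers satisfy e_k(S_X, B_Y) ≤ C · 2^{−k/(d−1)} · λ_Y(d−1)/λ_X(d−1), where λ_X(ℓ) := ‖∑_{i=1}^ℓ e_i‖_X, λ_Y(ℓ) := ‖∑_{i=1}^ℓ e_i‖_Y, S_X = {x : ‖x‖_X = 1} and B_Y = {x : ‖x‖_Y ≤ 1}. -/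

import Mathlib

open scoped Pointwise BigOperators

/-- A symmetric norm on `ℝ^d`: a norm invariant under permutations of coordinates and under
sign changes. -/
def IsSymmNorm {d : ℕ} (f : (Fin d → ℝ) → ℝ) : Prop :=
  (∀ x, 0 ≤ f x) ∧ (∀ x, f x = 0 ↔ x = 0) ∧
  (∀ (l : ℝ) (x), f (l • x) = |l| * f x) ∧
  (∀ x y, f (x + y) ≤ f x + f y) ∧
  (∀ (π : Equiv.Perm (Fin d)) (ε : Fin d → ℝ), (∀ i, ε i = 1 ∨ ε i = -1) →
    ∀ x : Fin d → ℝ, f (fun i => ε i * x (π i)) = f x)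

/-- `λ_E(ℓ) = ‖∑_{i=1}^ℓ e_i‖_E`, the norm of the sum of the first `ℓ` standard basis
vectors. -/
noncomputable def lam {d : ℕ} (f : (Fin d → ℝ) → ℝ) (l : ℕ) : ℝ :=
  f (fun i => if (i : ℕ) < l then 1 else 0)

/-- The `k`-th (dyadic) entropy number of `K` with respect to the "unit ball" `B`:
the infimum of all `ε > 0` such that `K` can be covered by `2^(k-1)` translates of `ε • B`. -/
noncomputable def entropyNumber {d : ℕ} (K B : Set (Fin d → ℝ)) (k : ℕ) : ℝ :=
  sInf {ε : ℝ | 0 < ε ∧ ∃ c : Fin (2 ^ (k - 1)) → (Fin d → ℝ),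
    K ⊆ ⋃ j, (c j +ᵥ ε • B)}

variable {d : ℕ} {f : (Fin d → ℝ) → ℝ}

theorem sn_nonneg (hf : IsSymmNorm f) (x : Fin d → ℝ) : 0 ≤ f x := hf.1 x

theorem sn_smul (hf : IsSymmNorm f) (l : ℝ) (x : Fin d → ℝ) : f (l • x) = |l| * f x :=
  hf.2.2.1 l x

theorem sn_add (hf : IsSymmNorm f) (x y : Fin d → ℝ) : f (x + y) ≤ f x + f y :=
  hf.2.2.2.1 x y

theorem sn_zero (hf : IsSymmNorm f) : f 0 = 0 := (hf.2.1 0).2 rfl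

theorem sn_signflip (hf : IsSymmNorm f) (ε : Fin d → ℝ) (hε : ∀ i, ε i = 1 ∨ ε i = -1)
    (x : Fin d → ℝ) : f (fun i => ε i * x i) = f x := by
  simpa using hf.2.2.2.2 (Equiv.refl _) ε hε x

theorem sn_perm (hf : IsSymmNorm f) (π : Equiv.Perm (Fin d)) (x : Fin d → ℝ) :
    f (fun i => x (π i)) = f x := by
  have := hf.2.2.2.2 π (fun _ => 1) (fun _ => Or.inl rfl) x
  simpa using this

theorem sn_abs (hf : IsSymmNorm f) (x : Fin d → ℝ) : f (fun i => |x i|) = f x := by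
  have h : ∀ i, (if x i < 0 then (-1:ℝ) else 1) = 1 ∨ (if x i < 0 then (-1:ℝ) else 1) = -1 := by
    intro i; by_cases h : x i < 0 <;> simp [h]
  have := sn_signflip hf (fun i => if x i < 0 then (-1:ℝ) else 1) h x
  rw [← this]
  congr 1
  funext i
  by_cases h : x i < 0
  · simp [h, abs_of_neg h]
  · simp [h, abs_of_nonneg (not_lt.1 h)]

theorem sn_convex (hf : IsSymmNorm f) {a b : ℝ} (ha : 0 ≤ a) (hb : 0 ≤ b)
    (u v : Fin d → ℝ) : f (a • u + b • v) ≤ a * f u + b * f v := by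
  calc f (a • u + b • v) ≤ f (a • u) + f (b • v) := sn_add hf _ _
    _ = a * f u + b * f v := by rw [sn_smul hf, sn_smul hf, abs_of_nonneg ha, abs_of_nonneg hb]

theorem sn_update_le (hf : IsSymmNorm f) (v : Fin d → ℝ) (a : Fin d) {c b : ℝ}
    (h : |c| ≤ |b|) : f (Function.update v a c) ≤ f (Function.update v a b) := by
  rcases eq_or_ne b 0 with hb | hb
  · have hc : c = 0 := by
      rw [hb] at h; simpa using abs_nonpos_iff.1 (by simpa using h)
    rw [hb, hc]
  · set u := Function.update v a b with hu
    set ε : Fin d → ℝ := fun i => if i = a then (-1:ℝ) else 1 with hε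
    have hεpm : ∀ i, ε i = 1 ∨ ε i = -1 := by
      intro i; by_cases hi : i = a <;> simp [hε, hi]
    set w : Fin d → ℝ := fun i => ε i * u i with hw
    have hfw : f w = f u := sn_signflip hf ε hεpm u
    set τ := c / b with hτdef
    have hτ : |τ| ≤ 1 := by
      rw [hτdef, abs_div]
      exact div_le_one_of_le₀ h (abs_nonneg _)
    have h1 : (0:ℝ) ≤ (1 + τ)/2 := by
      have := neg_abs_le τ; linarith [abs_le.1 hτ]
    have h2 : (0:ℝ) ≤ (1 - τ)/2 := by linarith [abs_le.1 hτ]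
    have key : Function.update v a c = ((1+τ)/2) • u + ((1-τ)/2) • w := by
      funext i
      by_cases hi : i = a
      · subst hi
        simp only [Function.update_self, Pi.add_apply, Pi.smul_apply, smul_eq_mul, hw, hε,
          hu, if_pos rfl, Function.update_self, if_true]
        field_simp [hτdef]
        rw [hτdef]; field_simp; ring
      · simp only [Function.update_of_ne hi, Pi.add_apply, Pi.smul_apply, smul_eq_mul, hw, hε,
          if_neg hi, hu]
        ring
    rw [key]
    calc f (((1+τ)/2) • u + ((1-τ)/2) • w) ≤ ((1+τ)/2) * f u + ((1-τ)/2) * f w :=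
          sn_convex hf h1 h2 u w
      _ = f u := by rw [hfw]; ring

theorem sn_mono (hf : IsSymmNorm f) {x y : Fin d → ℝ} (h : ∀ i, |x i| ≤ |y i|) :
    f x ≤ f y := by
  classical
  have main : ∀ s : Finset (Fin d), f (fun i => if i ∈ s then x i else y i) ≤ f y := by
    intro s
    induction s using Finset.induction with
    | empty => simp
    | @insert a s ha ih =>
      set g : Fin d → ℝ := fun i => if i ∈ s then x i else y i with hg
      have step : (fun i => if i ∈ insert a s then x i else y i)
          = Function.update g a (x a) := by
        funext i
        by_cases hi : i = a
        · subst hi; simp [Function.update_self, hg]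
        · simp [Function.update_of_ne hi, hg, hi]
      have hga : Function.update g a (y a) = g := by
        funext i
        by_cases hi : i = a
        · subst hi; simp [Function.update_self, hg, ha]
        · simp [Function.update_of_ne hi]
      rw [step]
      calc f (Function.update g a (x a)) ≤ f (Function.update g a (y a)) :=
            sn_update_le hf g a (h a)
        _ = f g := by rw [hga]
        _ ≤ f y := ih
  have := main Finset.univ
  simpa using this

theorem sn_sum_le (hf : IsSymmNorm f) {ι : Type*} (s : Finset ι) (g : ι → Fin d → ℝ) :
    f (∑ i ∈ s, g i) ≤ ∑ i ∈ s, f (g i) := by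
  classical
  induction s using Finset.induction with
  | empty => simp [sn_zero hf]
  | @insert a s ha ih =>
    rw [Finset.sum_insert ha, Finset.sum_insert ha]
    calc f (g a + ∑ i ∈ s, g i) ≤ f (g a) + f (∑ i ∈ s, g i) := sn_add hf _ _
      _ ≤ f (g a) + ∑ i ∈ s, f (g i) := by linarith


theorem sn_coord (hf : IsSymmNorm f) (hb : ∀ i, f (Pi.single i 1) = 1) (x : Fin d → ℝ)
    (i : Fin d) : |x i| ≤ f x := by
  have h1 : f ((x i) • (Pi.single i (1:ℝ) : Fin d → ℝ)) = |x i| := by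
    rw [sn_smul hf, hb, mul_one]
  rw [← h1]
  apply sn_mono hf
  intro j
  by_cases hj : j = i
  · subst hj; simp [Pi.single_apply]
  · simp [Pi.single_apply, hj]

theorem sn_le_l1 (hf : IsSymmNorm f) (hb : ∀ i, f (Pi.single i 1) = 1) (x : Fin d → ℝ) :
    f x ≤ ∑ i, |x i| := by
  classical
  have hx := pi_eq_sum_univ x
  calc f x = f (∑ i, x i • fun j => if i = j then (1:ℝ) else 0) := by rw [← hx]
    _ ≤ ∑ i, f (x i • fun j => if i = j then (1:ℝ) else 0) := sn_sum_le hf _ _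
    _ = ∑ i, |x i| := by
        apply Finset.sum_congr rfl
        intro i _
        rw [sn_smul hf]
        have : (fun j => if i = j then (1:ℝ) else 0) = Pi.single i 1 := by
          funext j; simp [Pi.single_apply, eq_comm]
        rw [this, hb, mul_one]

theorem lam_top (hd : 0 < d) : lam f d = f (fun _ => 1) := by
  unfold lam
  congr 1
  funext i
  simp [i.isLt]

theorem sn_le_sup (hf : IsSymmNorm f) {x : Fin d → ℝ} {M : ℝ} (hM : 0 ≤ M)
    (h : ∀ i, |x i| ≤ M) (hd : 0 < d) : f x ≤ M * lam f d := by
  have h1 : f x ≤ f (fun _ => M) := by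
    apply sn_mono hf
    intro i
    calc |x i| ≤ M := h i
      _ ≤ |M| := le_abs_self M
  have h2 : f (fun _:Fin d => M) = M * f (fun _ => 1) := by
    have : (fun _:Fin d => M) = M • (fun _:Fin d => (1:ℝ)) := by funext i; simp
    rw [this, sn_smul hf, abs_of_nonneg hM]
  rw [lam_top hd]
  rw [h2] at h1
  exact h1

theorem sn_l1_lower (hf : IsSymmNorm f) {x : Fin d → ℝ} (hd : 0 < d) :
    lam f d * (∑ i, |x i|) ≤ d * f x := by
  haveI : NeZero d := ⟨hd.ne'⟩
  set S := ∑ i, |x i| with hS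
  have hS0 : 0 ≤ S := Finset.sum_nonneg fun i _ => abs_nonneg _
  have hshift : ∀ c : Fin d, f (fun i => |x (i + c)|) = f x := by
    intro c
    have h1 := sn_perm hf (Equiv.addRight c) (fun j => |x j|)
    simpa [Equiv.coe_addRight, sn_abs hf x] using h1
  have hsum : (∑ c : Fin d, fun i => |x (i + c)|) = fun _ : Fin d => S := by
    funext i
    rw [Finset.sum_apply]
    exact Fintype.sum_equiv (Equiv.addLeft i) _ _ (fun c => rfl)
  have h1 : f (fun _ : Fin d => S) ≤ (d : ℝ) * f x := by
    calc f (fun _ : Fin d => S) = f (∑ c : Fin d, fun i => |x (i + c)|) := by rw [hsum]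
      _ ≤ ∑ c : Fin d, f (fun i => |x (i + c)|) := sn_sum_le hf _ _
      _ = (d : ℝ) * f x := by
          rw [Finset.sum_congr rfl (fun c _ => hshift c)]
          simp [mul_comm]
  have h2 : f (fun _ : Fin d => S) = S * lam f d := by
    rw [lam_top hd]
    have : (fun _:Fin d => S) = S • (fun _:Fin d => (1:ℝ)) := by funext i; simp
    rw [this, sn_smul hf, abs_of_nonneg hS0]
  rw [h2] at h1
  linarith

theorem lam_mono (hf : IsSymmNorm f) {l l' : ℕ} (h : l ≤ l') : lam f l ≤ lam f l' := by
  apply sn_mono hf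
  intro i
  by_cases hi : (i:ℕ) < l
  · simp [hi, lt_of_lt_of_le hi h]
  · simp only [hi, if_false]
    split <;> norm_num

theorem lam_ge_one (hf : IsSymmNorm f) (hb : ∀ i, f (Pi.single i 1) = 1) {l : ℕ}
    (hl : 1 ≤ l) (hd : 0 < d) : 1 ≤ lam f l := by
  have h := sn_coord hf hb (fun i : Fin d => if (i:ℕ) < l then (1:ℝ) else 0) ⟨0, hd⟩
  have hl' : 0 < l := hl
  unfold lam
  simpa [hl'] using h

theorem lam_le_d (hf : IsSymmNorm f) (hb : ∀ i, f (Pi.single i 1) = 1) :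
    lam f d ≤ d := by
  have h := sn_le_l1 hf hb (fun i : Fin d => if (i:ℕ) < d then (1:ℝ) else 0)
  have h2 : ∀ i : Fin d, |if (i:ℕ) < d then (1:ℝ) else 0| = 1 := fun i => by simp [i.isLt]
  have h3 : (∑ i : Fin d, |if (i:ℕ) < d then (1:ℝ) else 0|) = d := by
    rw [Finset.sum_congr rfl (fun i _ => h2 i)]
    simp
  unfold lam
  rw [h3] at h
  exact h

theorem lam_pred (hf : IsSymmNorm f) (hb : ∀ i, f (Pi.single i 1) = 1) (hd : 2 ≤ d) :
    lam f d ≤ 2 * lam f (d-1) := by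
  have hd0 : 0 < d := by omega
  have hdd : d - 1 < d := by omega
  set a : Fin d := ⟨d-1, hdd⟩ with ha
  have hsplit : (fun i : Fin d => if (i:ℕ) < d then (1:ℝ) else 0)
      = (fun i : Fin d => if (i:ℕ) < d - 1 then (1:ℝ) else 0) + Pi.single a 1 := by
    funext i
    by_cases hi : (i:ℕ) < d - 1
    · have hia : i ≠ a := by
        intro h
        rw [h] at hi
        have h9 : (d-1:ℕ) < d - 1 := hi
        omega
      simp [hi, i.isLt, Pi.single_apply, hia]
    · have hia : i = a := by
        have h4 := i.isLt
        apply Fin.ext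
        simp only [ha]
        omega
      have hdne : d ≠ 0 := by omega
      rw [hia]
      have h5 : ¬ ((d - 1 : ℕ) < d - 1) := lt_irrefl _
      simp only [Pi.add_apply, ha, Pi.single_eq_same]
      rw [if_pos hdd, if_neg h5]
      norm_num
  have h1 : lam f d ≤ lam f (d-1) + 1 := by
    have h6 := sn_add hf (fun i : Fin d => if (i:ℕ) < d - 1 then (1:ℝ) else 0) (Pi.single a 1)
    rw [hb] at h6
    unfold lam
    rw [hsplit]
    exact h6
  have h2 : 1 ≤ lam f (d-1) := lam_ge_one hf hb (by omega) hd0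
  linarith

theorem sn_continuous (hf : IsSymmNorm f) (hb : ∀ i, f (Pi.single i 1) = 1) :
    Continuous f := by
  have hneg : ∀ v : Fin d → ℝ, f (-v) = f v := by
    intro v
    have h : (-v) = (-1 : ℝ) • v := by funext i; simp
    rw [h, sn_smul hf]; simp
  have key : ∀ a b : Fin d → ℝ, dist (f a) (f b) ≤ ((d : NNReal) : ℝ) * dist a b := by
    intro a b
    rw [Real.dist_eq]
    have h1 : f (a - b) ≤ (d:ℝ) * dist a b := by
      calc f (a - b) ≤ ∑ i, |(a-b) i| := sn_le_l1 hf hb _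
        _ ≤ ∑ _i : Fin d, dist a b := by
            apply Finset.sum_le_sum
            intro i _
            have h := dist_le_pi_dist a b i
            rw [Real.dist_eq] at h
            exact h
        _ = (d:ℝ) * dist a b := by simp [mul_comm]
    have h2 : f a - f b ≤ f (a - b) := by
      have h := sn_add hf b (a - b)
      simp at h
      linarith
    have h3 : f b - f a ≤ f (a - b) := by
      have h := sn_add hf a (b - a)
      simp at h
      have hn : f (b - a) = f (a - b) := by
        rw [show b - a = -(a-b) by ring, hneg]
      rw [hn] at h
      linarith
    have := abs_sub_le_iff.2 ⟨le_trans h2 h1, le_trans h3 h1⟩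
    simpa using this
  exact (LipschitzWith.of_dist_le_mul key).continuous

theorem exists_support (hf : IsSymmNorm f) (hb : ∀ i, f (Pi.single i 1) = 1)
    (x : Fin d → ℝ) (hx : f x = 1) :
    ∃ ν : Fin d → ℝ, (∃ i, ν i ≠ 0) ∧
      ∀ y, f y ≤ 1 → ∑ j, ν j * y j ≤ ∑ j, ν j * x j := by
  classical
  set U : Set (Fin d → ℝ) := {y | f y < 1} with hU
  have hconv : Convex ℝ U := by
    intro a ha b hbb s t hs ht hst
    simp only [hU, Set.mem_setOf_eq] at ha hbb ⊢
    have := sn_convex hf hs ht a b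
    rcases eq_or_lt_of_le hs with h0 | h0
    · have hts : t = 1 := by linarith
      have : s • a + t • b = b := by rw [← h0, hts]; funext i; simp
      rw [this]; exact hbb
    · have hsa : s * f a < s := by nlinarith
      have htb : t * f b ≤ t := by nlinarith
      calc f (s • a + t • b) ≤ s * f a + t * f b := this
        _ < s + t := by linarith
        _ = 1 := hst
  have hopen : IsOpen U := by
    have : U = f ⁻¹' (Set.Iio 1) := rfl
    rw [this]
    exact IsOpen.preimage (sn_continuous hf hb) isOpen_Iio
  have hxU : x ∉ U := by
    intro hmem
    rw [hU] at hmem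
    simp only [Set.mem_setOf_eq, hx] at hmem
    exact lt_irrefl 1 hmem
  obtain ⟨F, hF⟩ := geometric_hahn_banach_open_point hconv hopen hxU
  set ν : Fin d → ℝ := fun j => F (Pi.single j 1) with hν
  have hrep : ∀ y, F y = ∑ j, ν j * y j := by
    intro y
    conv_lhs => rw [pi_eq_sum_univ y]
    rw [map_sum]
    apply Finset.sum_congr rfl
    intro j _
    rw [map_smul]
    have hsingle : (fun i => if j = i then (1:ℝ) else 0) = Pi.single j 1 := by
      funext i; simp [Pi.single_apply, eq_comm]
    rw [hsingle]
    simp [hν, mul_comm]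
  have h0U : (0 : Fin d → ℝ) ∈ U := by simp [hU, sn_zero hf]
  have hFx : 0 < F x := by
    have := hF 0 h0U
    simpa using this
  have hball : ∀ y, f y ≤ 1 → F y ≤ F x := by
    intro y hy
    by_contra hgt
    push_neg at hgt
    have hFy : 0 < F y := lt_trans hFx hgt
    set c : ℝ := (F x + F y) / (2 * F y) with hc
    have hc0 : 0 < c := by positivity
    have hc1 : c < 1 := by
      rw [hc, div_lt_one (by positivity)]
      linarith
    have hcy : c • y ∈ U := by
      simp only [hU, Set.mem_setOf_eq]
      rw [sn_smul hf, abs_of_pos hc0]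
      calc c * f y ≤ c * 1 := by
            apply mul_le_mul_of_nonneg_left hy (le_of_lt hc0)
        _ < 1 := by linarith
    have hlt := hF _ hcy
    rw [map_smul] at hlt
    have hlt2 : c * F y < F x := by simpa using hlt
    have hce : c * F y = (F x + F y) / 2 := by
      rw [hc]; field_simp
    rw [hce] at hlt2
    linarith
  refine ⟨ν, ?_, ?_⟩
  · by_contra hno
    push_neg at hno
    have : F x = 0 := by
      rw [hrep]
      apply Finset.sum_eq_zero
      intro j _
      rw [hno j]; ring
    linarith
  · intro y hy
    have := hball y hy
    rw [hrep y, hrep x] at this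
    exact this



theorem geo_int (x : ℝ) (hx0 : 0 ≤ x) (hx1 : x < 1) (M : ℕ) :
    ∑ v ∈ Finset.Icc (-(M:ℤ)) M, x ^ (v.natAbs) ≤ (1+x)/(1-x) := by
  have hx1' : 0 < 1 - x := by linarith
  have key : ∀ M : ℕ, ∑ v ∈ Finset.Icc (-(M:ℤ)) M, x ^ (v.natAbs)
      ≤ (1+x)/(1-x) - 2 * x^(M+1)/(1-x) := by
    intro M
    induction M with
    | zero =>
      have h0 : Finset.Icc (-((0:ℕ):ℤ)) ((0:ℕ):ℤ) = {0} := by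
        norm_num
      rw [h0]
      simp only [Finset.sum_singleton, Int.natAbs_zero, pow_zero]
      have heq : (1+x)/(1-x) - 2*x^(0+1)/(1-x) = 1 := by
        rw [← sub_div]
        rw [div_eq_one_iff_eq (ne_of_gt hx1')]
        ring
      rw [heq]
    | succ M ih =>
      have hsplit : Finset.Icc (-((M+1:ℕ):ℤ)) ((M+1:ℕ):ℤ)
          = insert (-((M+1:ℕ):ℤ)) (insert ((M+1:ℕ):ℤ) (Finset.Icc (-(M:ℤ)) M)) := by
        ext v
        simp only [Finset.mem_Icc, Finset.mem_insert]
        push_cast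
        omega
      have h1 : ((M+1:ℕ):ℤ) ∉ Finset.Icc (-(M:ℤ)) (M:ℤ) := by
        simp only [Finset.mem_Icc]
        push_cast
        omega
      have h2 : (-((M+1:ℕ):ℤ)) ∉ insert ((M+1:ℕ):ℤ) (Finset.Icc (-(M:ℤ)) (M:ℤ)) := by
        simp only [Finset.mem_Icc, Finset.mem_insert]
        push_cast
        omega
      rw [hsplit, Finset.sum_insert h2, Finset.sum_insert h1]
      have hab1 : ((-((M+1:ℕ):ℤ)).natAbs) = M + 1 := by
        rw [Int.natAbs_neg]
        exact Int.natAbs_natCast _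
      have hab2 : (((M+1:ℕ):ℤ).natAbs) = M + 1 := Int.natAbs_natCast _
      rw [hab1, hab2]
      have hpow : x^(M+1+1) = x * x^(M+1) := by ring
      have hgoal : x^(M+1) + (x^(M+1) + ((1+x)/(1-x) - 2*x^(M+1)/(1-x)))
          ≤ (1+x)/(1-x) - 2*x^(M+1+1)/(1-x) := by
        rw [hpow]
        have hBC : 2*x^(M+1)/(1-x) - 2*(x*x^(M+1))/(1-x)
            = (2*x^(M+1) - 2*(x*x^(M+1)))/(1-x) := by rw [← sub_div]
        have key2 : 2*x^(M+1) ≤ (2*x^(M+1) - 2*(x*x^(M+1)))/(1-x) := by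
          rw [le_div_iff₀ hx1']
          exact le_of_eq (by ring)
        linarith [hBC, key2]
      calc x^(M+1) + (x^(M+1) + ∑ v ∈ Finset.Icc (-(M:ℤ)) M, x ^ (v.natAbs))
          ≤ x^(M+1) + (x^(M+1) + ((1+x)/(1-x) - 2*x^(M+1)/(1-x))) := by linarith
        _ ≤ (1+x)/(1-x) - 2*x^(M+1+1)/(1-x) := hgoal
  calc ∑ v ∈ Finset.Icc (-(M:ℤ)) M, x ^ (v.natAbs)
      ≤ (1+x)/(1-x) - 2*x^(M+1)/(1-x) := key M
    _ ≤ (1+x)/(1-x) := by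
        have : 0 ≤ 2*x^(M+1)/(1-x) := by positivity
        linarith

theorem count_bound {d : ℕ} (M : ℕ) (i : Fin d) (n : ℝ) (hn : 0 ≤ n)
    (x : ℝ) (hx0 : 0 < x) (hx1 : x < 1) :
    (((Fintype.piFinset (fun _ : Fin d => Finset.Icc (-(M:ℤ)) M)).filter
        (fun w : Fin d → ℤ => w i = 0 ∧ (∑ j, ((w j).natAbs : ℝ)) ≤ n)).card : ℝ)
      ≤ (1/x) ^ n * ((1+x)/(1-x)) ^ (d-1) := by
  classical
  have hx0' : (0:ℝ) ≤ x := le_of_lt hx0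
  set box := Fintype.piFinset (fun _ : Fin d => Finset.Icc (-(M:ℤ)) M) with hbox
  set W := box.filter
    (fun w : Fin d → ℤ => w i = 0 ∧ (∑ j, ((w j).natAbs : ℝ)) ≤ n) with hWdef
  set t : Fin d → Finset ℤ :=
    fun j => if j = i then ({0} : Finset ℤ) else Finset.Icc (-(M:ℤ)) M with ht
  set boxi := Fintype.piFinset t with hboxi
  have hsub : W ⊆ boxi := by
    intro w hw
    rw [hWdef, Finset.mem_filter] at hw
    rw [hboxi, Fintype.mem_piFinset]
    intro j
    by_cases hj : j = i
    · subst hj; simp [ht, hw.2.1]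
    · simp only [ht, if_neg hj]
      exact (Fintype.mem_piFinset.1 hw.1) j
  set y := 1/x with hy
  have hyy : 0 < y := by positivity
  have hy1 : 1 ≤ y := by
    rw [hy, le_div_iff₀ hx0]
    linarith
  have hterm : ∀ w : Fin d → ℤ, (∑ j, ((w j).natAbs : ℝ)) ≤ n →
      (1:ℝ) ≤ y ^ n * x ^ (∑ j, (w j).natAbs) := by
    intro w hw
    have hS : ((∑ j, (w j).natAbs : ℕ) : ℝ) ≤ n := by push_cast; exact hw
    set S := ∑ j, (w j).natAbs with hSdef
    have hxS : x ^ S = y ^ (-(S:ℝ)) := by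
      rw [hy, Real.rpow_neg (by positivity), Real.rpow_natCast]
      rw [one_div, inv_pow, inv_inv]
    rw [hxS, ← Real.rpow_add hyy]
    calc (1:ℝ) = y ^ (0:ℝ) := by rw [Real.rpow_zero]
      _ ≤ y ^ (n + -(S:ℝ)) := by
          apply Real.rpow_le_rpow_of_exponent_le hy1
          linarith
  have step1 : (W.card : ℝ) ≤ ∑ w ∈ W, y ^ n * x ^ (∑ j, (w j).natAbs) := by
    rw [Finset.card_eq_sum_ones W]
    push_cast
    apply Finset.sum_le_sum
    intro w hw
    rw [hWdef, Finset.mem_filter] at hw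
    exact hterm w hw.2.2
  have step2 : ∑ w ∈ W, y ^ n * x ^ (∑ j, (w j).natAbs)
      ≤ ∑ w ∈ boxi, y ^ n * x ^ (∑ j, (w j).natAbs) := by
    apply Finset.sum_le_sum_of_subset_of_nonneg hsub
    intro w _ _
    positivity
  set G := ∑ v ∈ Finset.Icc (-(M:ℤ)) M, x ^ (v.natAbs) with hG
  have hG0 : 0 ≤ G := Finset.sum_nonneg fun v _ => by positivity
  have hGle : G ≤ (1+x)/(1-x) := geo_int x hx0' hx1 M
  have step3 : ∑ w ∈ boxi, x ^ (∑ j, (w j).natAbs) = G ^ (d-1) := by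
    have hfac : ∀ w : Fin d → ℤ, x ^ (∑ j, (w j).natAbs) = ∏ j, x ^ ((w j).natAbs) := by
      intro w
      rw [← Finset.prod_pow_eq_pow_sum]
    rw [Finset.sum_congr rfl (fun w _ => hfac w)]
    rw [hboxi, ← Finset.prod_univ_sum t (fun j v => x ^ (v.natAbs))]
    have hfactor : ∀ j : Fin d, (∑ v ∈ t j, x ^ (v.natAbs)) = if j = i then 1 else G := by
      intro j
      by_cases hj : j = i
      · simp [ht, hj]
      · simp only [ht, if_neg hj]; exact hG.symm
    rw [Finset.prod_congr rfl (fun j _ => hfactor j)]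
    rw [← Finset.mul_prod_erase Finset.univ _ (Finset.mem_univ i)]
    rw [if_pos rfl, one_mul]
    rw [Finset.prod_congr rfl (fun j hj => if_neg (Finset.ne_of_mem_erase hj))]
    rw [Finset.prod_const]
    congr 1
    rw [Finset.card_erase_of_mem (Finset.mem_univ i), Finset.card_univ, Fintype.card_fin]
  calc (W.card : ℝ) ≤ ∑ w ∈ boxi, y ^ n * x ^ (∑ j, (w j).natAbs) := le_trans step1 step2
    _ = y ^ n * ∑ w ∈ boxi, x ^ (∑ j, (w j).natAbs) := by rw [Finset.mul_sum]
    _ = y ^ n * G ^ (d-1) := by rw [step3]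
    _ ≤ y ^ n * ((1+x)/(1-x)) ^ (d-1) := by
        apply mul_le_mul_of_nonneg_left _ (le_of_lt (Real.rpow_pos_of_pos hyy n))
        exact pow_le_pow_left₀ hG0 hGle _


theorem cover_exists {d : ℕ} (hd : 2 ≤ d) {nX : (Fin d → ℝ) → ℝ}
    (hfX : IsSymmNorm nX) (hbX : ∀ i, nX (Pi.single i 1) = 1)
    (s : ℝ) (hs : 0 < s) :
    ∃ Z : Finset (Fin d → ℤ),
      (∀ x : Fin d → ℝ, nX x = 1 → ∃ z ∈ Z, ∀ j, |x j - 2*s*(z j : ℝ)| ≤ s) ∧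
      (∀ xx : ℝ, 0 < xx → xx < 1 →
        (Z.card : ℝ) ≤ (2*d+1) * (2*d) *
          ((1/xx) ^ ((d:ℝ)/(2*s*lam nX d) + ((d:ℝ)-1)/2) * ((1+xx)/(1-xx)) ^ (d-1))) := by
  classical
  have hd0 : 0 < d := by omega
  haveI : Nonempty (Fin d) := ⟨⟨0, hd0⟩⟩
  set lamX := lam nX d with hlamX
  have hlam1 : 1 ≤ lamX := lam_ge_one hfX hbX (by omega) hd0
  have hlampos : 0 < lamX := by linarith
  set M : ℕ := ⌈1/s⌉₊ + 1 with hM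
  have hMR : 1/(2*s) + 1/2 ≤ (M:ℝ) := by
    have h1 : 1/s ≤ (⌈1/s⌉₊ : ℝ) := Nat.le_ceil _
    have h2 : 1/(2*s) ≤ 1/s := by
      rw [div_le_div_iff₀ (by positivity) hs]
      linarith
    push_cast [hM]
    linarith
  set box := Fintype.piFinset (fun _ : Fin d => Finset.Icc (-(M:ℤ)) M) with hbox
  set Z := box.filter
    (fun z : Fin d → ℤ => ∃ x : Fin d → ℝ, nX x = 1 ∧ ∀ j, |x j - 2*s*(z j : ℝ)| ≤ s)
    with hZ
  have hcover : ∀ x : Fin d → ℝ, nX x = 1 → ∃ z ∈ Z, ∀ j, |x j - 2*s*(z j : ℝ)| ≤ s := by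
    intro x hx
    set z : Fin d → ℤ := fun j => round (x j / (2*s)) with hz
    have hzx : ∀ j, |x j - 2*s*(z j : ℝ)| ≤ s := by
      intro j
      have h1 : |x j/(2*s) - ((z j : ℤ) : ℝ)| ≤ 1/2 := by
        rw [hz]; exact abs_sub_round _
      have h2 : x j - 2*s*(z j:ℝ) = (2*s) * (x j/(2*s) - (z j:ℝ)) := by
        field_simp
      rw [h2, abs_mul, abs_of_pos (by positivity : (0:ℝ) < 2*s)]
      calc 2*s*|x j/(2*s) - (z j:ℝ)| ≤ 2*s*(1/2) := by
            apply mul_le_mul_of_nonneg_left h1 (by positivity)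
        _ = s := by ring
    have hzbox : z ∈ box := by
      rw [hbox, Fintype.mem_piFinset]
      intro j
      have hcoord : |x j| ≤ 1 := by
        rw [← hx]; exact sn_coord hfX hbX x j
      have h3 : |(z j : ℝ)| ≤ (M:ℝ) := by
        have h4 : |(z j:ℝ)| ≤ |(z j:ℝ) - x j/(2*s)| + |x j/(2*s)| := by
          calc |(z j:ℝ)| = |((z j:ℝ) - x j/(2*s)) + x j/(2*s)| := by ring_nf
            _ ≤ _ := abs_add_le _ _
        have h5 : |(z j:ℝ) - x j/(2*s)| ≤ 1/2 := by
          rw [abs_sub_comm, hz]; exact abs_sub_round _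
        have h6 : |x j/(2*s)| ≤ 1/(2*s) := by
          rw [abs_div, abs_of_pos (by positivity : (0:ℝ) < 2*s)]
          exact (div_le_div_iff_of_pos_right (by positivity)).2 hcoord
        linarith [hMR]
      have habs : |z j| ≤ (M:ℤ) := by
        have h7 : ((|z j| : ℤ) : ℝ) ≤ ((M:ℤ):ℝ) := by
          push_cast
          rw [← Int.cast_abs]
          exact_mod_cast h3
        exact_mod_cast h7
      rw [Finset.mem_Icc]
      exact abs_le.1 habs
    exact ⟨z, Finset.mem_filter.2 ⟨hzbox, ⟨x, hx, hzx⟩⟩, hzx⟩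
  refine ⟨Z, hcover, ?_⟩
  -- cardinality bound
  intro xx hxx0 hxx1
  set n : ℝ := (d:ℝ)/(2*s*lamX) + ((d:ℝ)-1)/2 with hn
  have hd1R : (1:ℝ) ≤ (d:ℝ) := by exact_mod_cast hd0
  have hn0 : 0 ≤ n := by
    have h1 : (0:ℝ) ≤ (d:ℝ)/(2*s*lamX) := by positivity
    rw [hn]; linarith
  have hwit : ∀ z ∈ Z, ∃ x : Fin d → ℝ, nX x = 1 ∧ ∀ j, |x j - 2*s*(z j : ℝ)| ≤ s :=
    fun z hz => (Finset.mem_filter.1 hz).2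
  choose! xw hxw1 hxw2 using hwit
  have hsupp : ∀ z ∈ Z, ∃ ν : Fin d → ℝ, (∃ i, ν i ≠ 0) ∧
      ∀ y, nX y ≤ 1 → ∑ j, ν j * y j ≤ ∑ j, ν j * (xw z) j :=
    fun z hz => exists_support hfX hbX _ (hxw1 z hz)
  choose! vw hv1 hv2 using hsupp
  have hdom : ∀ z ∈ Z, ∃ i : Fin d, (∀ j, |vw z j| ≤ |vw z i|) ∧ vw z i ≠ 0 := by
    intro z hz
    obtain ⟨i, _, hmax⟩ := Finset.exists_max_image (Finset.univ : Finset (Fin d))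
      (fun i => |vw z i|) ⟨⟨0, hd0⟩, Finset.mem_univ _⟩
    refine ⟨i, fun j => hmax j (Finset.mem_univ j), ?_⟩
    obtain ⟨i₀, hi₀⟩ := hv1 z hz
    intro hzero
    apply hi₀
    have h2 := hmax i₀ (Finset.mem_univ i₀)
    rw [hzero] at h2
    simpa using h2
  choose! iw hi1 hi2 using hdom
  set g : (Fin d → ℤ) → Fin d × Bool × (Fin d → ℤ) :=
    fun z => (iw z, decide (0 ≤ vw z (iw z)), Function.update z (iw z) 0) with hg
  have oneside : ∀ z ∈ Z, ∀ z' ∈ Z,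
      -( |vw z (iw z)| * ∑ j ∈ Finset.univ.erase (iw z), |xw z j - xw z' j| )
        ≤ vw z (iw z) * (xw z (iw z) - xw z' (iw z)) := by
    intro z hz z' hz'
    have hsum := hv2 z hz (xw z') (le_of_eq (hxw1 z' hz'))
    have hsplit1 : ∑ j, vw z j * xw z j
        = vw z (iw z) * xw z (iw z) + ∑ j ∈ Finset.univ.erase (iw z), vw z j * xw z j :=
      (Finset.add_sum_erase _ _ (Finset.mem_univ (iw z))).symm
    have hsplit2 : ∑ j, vw z j * xw z' j
        = vw z (iw z) * xw z' (iw z) + ∑ j ∈ Finset.univ.erase (iw z), vw z j * xw z' j :=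
      (Finset.add_sum_erase _ _ (Finset.mem_univ (iw z))).symm
    have h1 : ∑ j ∈ Finset.univ.erase (iw z), (vw z j * xw z' j - vw z j * xw z j)
        ≤ vw z (iw z) * (xw z (iw z) - xw z' (iw z)) := by
      rw [hsplit1, hsplit2] at hsum
      rw [Finset.sum_sub_distrib]
      nlinarith [hsum]
    have h2 : ∀ j : Fin d, -(|vw z j| * |xw z j - xw z' j|)
        ≤ vw z j * xw z' j - vw z j * xw z j := by
      intro j
      have hna := neg_abs_le (vw z j * (xw z' j - xw z j))
      have habs : |vw z j * (xw z' j - xw z j)| = |vw z j| * |xw z j - xw z' j| := by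
        rw [abs_mul, abs_sub_comm]
      calc -(|vw z j| * |xw z j - xw z' j|) = -|vw z j * (xw z' j - xw z j)| := by rw [habs]
        _ ≤ vw z j * (xw z' j - xw z j) := hna
        _ = vw z j * xw z' j - vw z j * xw z j := by ring
    have h3 : -(∑ j ∈ Finset.univ.erase (iw z), |vw z j| * |xw z j - xw z' j|)
        ≤ ∑ j ∈ Finset.univ.erase (iw z), (vw z j * xw z' j - vw z j * xw z j) := by
      rw [← Finset.sum_neg_distrib]
      exact Finset.sum_le_sum fun j _ => h2 j
    have h4 : ∑ j ∈ Finset.univ.erase (iw z), |vw z j| * |xw z j - xw z' j|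
        ≤ |vw z (iw z)| * ∑ j ∈ Finset.univ.erase (iw z), |xw z j - xw z' j| := by
      rw [Finset.mul_sum]
      exact Finset.sum_le_sum fun j _ =>
        mul_le_mul_of_nonneg_right (hi1 z hz j) (abs_nonneg _)
    linarith
  have key : ∀ z ∈ Z, ∀ z' ∈ Z, g z = g z' → |z (iw z) - z' (iw z)| ≤ (d:ℤ) := by
    intro z hz z' hz' hgzz
    have hieq : iw z' = iw z := by
      have := congrArg Prod.fst hgzz
      simpa [hg] using this.symm
    have hupd : Function.update z (iw z) 0 = Function.update z' (iw z) 0 := by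
      have h5 := congrArg (fun p => p.2.2) hgzz
      simp only [hg] at h5
      rw [hieq] at h5
      exact h5
    have hsign : (0 ≤ vw z (iw z)) ↔ (0 ≤ vw z' (iw z)) := by
      have h5 := congrArg (fun p => p.2.1) hgzz
      simp only [hg] at h5
      rw [hieq] at h5
      exact decide_eq_decide.1 h5
    have hzj : ∀ j, j ≠ iw z → z j = z' j := by
      intro j hj
      have h5 := congrFun hupd j
      rwa [Function.update_of_ne hj, Function.update_of_ne hj] at h5
    set D := ∑ j ∈ Finset.univ.erase (iw z), |xw z j - xw z' j| with hD
    have hD0 : 0 ≤ D := Finset.sum_nonneg fun j _ => abs_nonneg _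
    have hDbound : D ≤ 2*s*((d:ℝ)-1) := by
      have hterm : ∀ j ∈ Finset.univ.erase (iw z), |xw z j - xw z' j| ≤ 2*s := by
        intro j hj
        have hjne : j ≠ iw z := Finset.ne_of_mem_erase hj
        have e1 := hxw2 z hz j
        have e2 := hxw2 z' hz' j
        rw [← hzj j hjne] at e2
        calc |xw z j - xw z' j|
            ≤ |xw z j - 2*s*(z j:ℝ)| + |2*s*(z j:ℝ) - xw z' j| := abs_sub_le _ _ _
          _ ≤ s + s := add_le_add e1 (by rw [abs_sub_comm]; exact e2)
          _ = 2*s := by ring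
      calc D ≤ (Finset.univ.erase (iw z)).card • (2*s) :=
            Finset.sum_le_card_nsmul _ _ _ hterm
        _ = ((d-1:ℕ):ℝ) * (2*s) := by
            rw [Finset.card_erase_of_mem (Finset.mem_univ _), Finset.card_univ,
              Fintype.card_fin, nsmul_eq_mul]
        _ = 2*s*((d:ℝ)-1) := by
            rw [Nat.cast_sub (by omega : 1 ≤ d)]
            push_cast
            ring
    have hDsym : ∑ j ∈ Finset.univ.erase (iw z), |xw z' j - xw z j| = D := by
      rw [hD]
      exact Finset.sum_congr rfl fun j _ => abs_sub_comm _ _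
    have hos1 := oneside z hz z' hz'
    have hos2 := oneside z' hz' z hz
    rw [hieq, hDsym] at hos2
    rw [← hD] at hos1
    have hv0 : vw z (iw z) ≠ 0 := hi2 z hz
    have hv'0 : vw z' (iw z) ≠ 0 := by
      have := hi2 z' hz'
      rwa [hieq] at this
    have hxx' : |xw z (iw z) - xw z' (iw z)| ≤ D := by
      rcases le_or_gt 0 (vw z (iw z)) with hpos | hneg
      · have hpos' : 0 < vw z (iw z) := lt_of_le_of_ne hpos (Ne.symm hv0)
        have hpos2 : 0 < vw z' (iw z) := lt_of_le_of_ne (hsign.1 hpos) (Ne.symm hv'0)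
        have e1 : -D ≤ xw z (iw z) - xw z' (iw z) := by
          rw [abs_of_pos hpos'] at hos1
          have h6 : vw z (iw z) * (-D) ≤ vw z (iw z) * (xw z (iw z) - xw z' (iw z)) := by
            calc vw z (iw z) * (-D) = -(vw z (iw z) * D) := by ring
              _ ≤ _ := hos1
          exact (mul_le_mul_iff_right₀ hpos').1 h6
        have e2 : -D ≤ xw z' (iw z) - xw z (iw z) := by
          rw [abs_of_pos hpos2] at hos2
          have h6 : vw z' (iw z) * (-D) ≤ vw z' (iw z) * (xw z' (iw z) - xw z (iw z)) := by
            calc vw z' (iw z) * (-D) = -(vw z' (iw z) * D) := by ring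
              _ ≤ _ := hos2
          exact (mul_le_mul_iff_right₀ hpos2).1 h6
        rw [abs_le]; constructor <;> linarith
      · have hneg2 : vw z' (iw z) < 0 := by
          rcases lt_or_ge (vw z' (iw z)) 0 with h | h
          · exact h
          · exact absurd (hsign.2 h) (not_le.2 hneg)
        have e1 : xw z (iw z) - xw z' (iw z) ≤ D := by
          rw [abs_of_neg hneg] at hos1
          have h6 : vw z (iw z) * D ≤ vw z (iw z) * (xw z (iw z) - xw z' (iw z)) := by
            calc vw z (iw z) * D = -(-vw z (iw z) * D) := by ring
              _ ≤ _ := hos1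
          exact ((mul_le_mul_left_of_neg hneg).1 h6)
        have e2 : xw z' (iw z) - xw z (iw z) ≤ D := by
          rw [abs_of_neg hneg2] at hos2
          have h6 : vw z' (iw z) * D ≤ vw z' (iw z) * (xw z' (iw z) - xw z (iw z)) := by
            calc vw z' (iw z) * D = -(-vw z' (iw z) * D) := by ring
              _ ≤ _ := hos2
          exact ((mul_le_mul_left_of_neg hneg2).1 h6)
        rw [abs_le]; constructor <;> linarith
    have e1 := hxw2 z hz (iw z)
    have e2 := hxw2 z' hz' (iw z)
    have h2s : (0:ℝ) < 2*s := by positivity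
    have tri : (2*s) * |(z (iw z):ℝ) - (z' (iw z):ℝ)| ≤ 2*s*(d:ℝ) := by
      have lhs_eq : (2*s) * |(z (iw z):ℝ) - (z' (iw z):ℝ)|
          = |2*s*(z (iw z):ℝ) - 2*s*(z' (iw z):ℝ)| := by
        rw [show (2*s*(z (iw z):ℝ) - 2*s*(z' (iw z):ℝ)) = (2*s) * ((z (iw z):ℝ) - (z' (iw z):ℝ)) by ring]
        rw [abs_mul, abs_of_pos h2s]
      rw [lhs_eq]
      calc |2*s*(z (iw z):ℝ) - 2*s*(z' (iw z):ℝ)|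
          ≤ |2*s*(z (iw z):ℝ) - xw z (iw z)| + |xw z (iw z) - 2*s*(z' (iw z):ℝ)| :=
            abs_sub_le _ _ _
        _ ≤ |2*s*(z (iw z):ℝ) - xw z (iw z)|
            + (|xw z (iw z) - xw z' (iw z)| + |xw z' (iw z) - 2*s*(z' (iw z):ℝ)|) := by
            have := abs_sub_le (xw z (iw z)) (xw z' (iw z)) (2*s*(z' (iw z):ℝ))
            linarith
        _ ≤ s + (D + s) := by
            have e1' : |2*s*(z (iw z):ℝ) - xw z (iw z)| ≤ s := by
              rw [abs_sub_comm]; exact e1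
            have e2' : |xw z' (iw z) - 2*s*(z' (iw z):ℝ)| ≤ s := e2
            linarith [hxx']
        _ ≤ s + (2*s*((d:ℝ)-1) + s) := by linarith [hDbound]
        _ = 2*s*(d:ℝ) := by ring
    have hZR : |(z (iw z):ℝ) - (z' (iw z):ℝ)| ≤ (d:ℝ) := by
      have := (mul_le_mul_iff_right₀ h2s).1 (by linarith [tri] :
        (2*s) * |(z (iw z):ℝ) - (z' (iw z):ℝ)| ≤ (2*s) * (d:ℝ))
      exact this
    have hcast : ((|z (iw z) - z' (iw z)| : ℤ) : ℝ) ≤ ((d:ℤ):ℝ) := by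
      rw [Int.cast_abs]
      push_cast
      push_cast at hZR
      exact hZR
    exact_mod_cast hcast
  -- fiber bound
  have hfiber : ∀ b ∈ Z.image g, (Z.filter (fun z => g z = b)).card ≤ 2*d+1 := by
    intro b hb
    obtain ⟨z₀, hz₀Z, hz₀⟩ := Finset.mem_image.1 hb
    have hmap : ∀ z ∈ Z.filter (fun z => g z = b), z (iw z₀) ∈
        Finset.Icc (z₀ (iw z₀) - d) (z₀ (iw z₀) + d) := by
      intro z hz
      obtain ⟨hzZ, hgz⟩ := Finset.mem_filter.1 hz
      have hkey := key z hzZ z₀ hz₀Z (by rw [hgz, hz₀])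
      have hieq : iw z = iw z₀ := by
        have := congrArg Prod.fst (hgz.trans hz₀.symm)
        simpa [hg] using this
      rw [hieq] at hkey
      rw [Finset.mem_Icc]
      have := abs_le.1 hkey
      omega
    have hinj : Set.InjOn (fun z : Fin d → ℤ => z (iw z₀))
        ↑(Z.filter (fun z => g z = b)) := by
      intro z hz z' hz' hval
      simp only [Finset.coe_filter, Set.mem_setOf_eq] at hz hz'
      have hiz : iw z = iw z₀ := by
        have := congrArg Prod.fst (hz.2.trans hz₀.symm)
        simpa [hg] using this
      have hiz' : iw z' = iw z₀ := by
        have := congrArg Prod.fst (hz'.2.trans hz₀.symm)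
        simpa [hg] using this
      have hupd : Function.update z (iw z₀) 0 = Function.update z' (iw z₀) 0 := by
        have h5 := congrArg (fun p => p.2.2) (hz.2.trans hz'.2.symm)
        simp only [hg] at h5
        rw [hiz, hiz'] at h5
        exact h5
      funext j
      by_cases hj : j = iw z₀
      · rw [hj]; exact hval
      · have h5 := congrFun hupd j
        rwa [Function.update_of_ne hj, Function.update_of_ne hj] at h5
    calc (Z.filter (fun z => g z = b)).card
        ≤ (Finset.Icc (z₀ (iw z₀) - d) (z₀ (iw z₀) + d)).card :=
          Finset.card_le_card_of_injOn _ hmap hinj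
      _ = 2*d+1 := by
          rw [Int.card_Icc]
          omega
  have hcard1 : Z.card ≤ (2*d+1) * (Z.image g).card :=
    Finset.card_le_mul_card_image Z (2*d+1) hfiber
  -- image bound
  set W : Fin d → Finset (Fin d → ℤ) := fun i => box.filter
    (fun w : Fin d → ℤ => w i = 0 ∧ (∑ j, ((w j).natAbs : ℝ)) ≤ n) with hW
  set T : Finset (Fin d × Bool × (Fin d → ℤ)) :=
    Finset.univ.biUnion (fun i : Fin d => Finset.univ.biUnion
      (fun σ : Bool => (W i).image (fun w => (i, σ, w)))) with hT
  have himgT : Z.image g ⊆ T := by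
    intro b hb
    obtain ⟨z, hzZ, hgz⟩ := Finset.mem_image.1 hb
    rw [hT]
    rw [Finset.mem_biUnion]
    refine ⟨iw z, Finset.mem_univ _, ?_⟩
    rw [Finset.mem_biUnion]
    refine ⟨decide (0 ≤ vw z (iw z)), Finset.mem_univ _, ?_⟩
    rw [Finset.mem_image]
    refine ⟨Function.update z (iw z) 0, ?_, by rw [← hgz]⟩
    rw [hW, Finset.mem_filter]
    have hzbox : z ∈ box := (Finset.mem_filter.1 hzZ).1
    refine ⟨?_, Function.update_self _ _ _, ?_⟩
    · rw [hbox, Fintype.mem_piFinset]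
      intro j
      by_cases hj : j = iw z
      · rw [hj, Function.update_self]
        rw [Finset.mem_Icc]
        constructor <;> simp
      · rw [Function.update_of_ne hj]
        exact (Fintype.mem_piFinset.1 hzbox) j
    · -- ℓ1 bound
      have hsplit : ∑ j, (((Function.update z (iw z) 0) j).natAbs : ℝ)
          = ∑ j ∈ Finset.univ.erase (iw z), ((z j).natAbs : ℝ) := by
        rw [← Finset.add_sum_erase _ _ (Finset.mem_univ (iw z))]
        rw [Function.update_self]
        simp only [Int.natAbs_zero, Nat.cast_zero, zero_add]
        exact Finset.sum_congr rfl fun j hj => by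
          rw [Function.update_of_ne (Finset.ne_of_mem_erase hj)]
      rw [hsplit]
      have hl1 : ∑ j, |xw z j| ≤ (d:ℝ)/lamX := by
        have hll := sn_l1_lower hfX (x := xw z) hd0
        rw [hxw1 z hzZ, mul_one] at hll
        rw [le_div_iff₀ hlampos]
        nlinarith [hll]
      have hterm : ∀ j, ((z j).natAbs : ℝ) * (2*s) ≤ |xw z j| + s := by
        intro j
        have e := hxw2 z hzZ j
        have habs : ((z j).natAbs : ℝ) = |(z j : ℝ)| := by
          rw [Nat.cast_natAbs, Int.cast_abs]
        rw [habs]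
        have h7 : |2*s*(z j:ℝ)| ≤ |xw z j| + s := by
          have h8 := abs_sub_abs_le_abs_sub (2*s*(z j:ℝ)) (xw z j)
          rw [abs_sub_comm] at h8
          linarith [e]
        calc |(z j:ℝ)| * (2*s) = |2*s*(z j:ℝ)| := by
              rw [abs_mul, abs_of_pos (by positivity : (0:ℝ) < 2*s)]
              ring
          _ ≤ |xw z j| + s := h7
      have hsum2 : (∑ j ∈ Finset.univ.erase (iw z), ((z j).natAbs : ℝ)) * (2*s)
          ≤ (d:ℝ)/lamX + ((d:ℝ)-1) * s := by
        rw [Finset.sum_mul]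
        calc ∑ j ∈ Finset.univ.erase (iw z), ((z j).natAbs : ℝ) * (2*s)
            ≤ ∑ j ∈ Finset.univ.erase (iw z), (|xw z j| + s) := by
              exact Finset.sum_le_sum fun j _ => hterm j
          _ = (∑ j ∈ Finset.univ.erase (iw z), |xw z j|) + ((d-1:ℕ):ℝ) * s := by
              rw [Finset.sum_add_distrib, Finset.sum_const,
                Finset.card_erase_of_mem (Finset.mem_univ _), Finset.card_univ,
                Fintype.card_fin, nsmul_eq_mul]
          _ ≤ (∑ j, |xw z j|) + ((d-1:ℕ):ℝ) * s := by
              have : ∑ j ∈ Finset.univ.erase (iw z), |xw z j| ≤ ∑ j, |xw z j| :=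
                Finset.sum_le_sum_of_subset_of_nonneg (Finset.erase_subset _ _)
                  (fun j _ _ => abs_nonneg _)
              linarith
          _ ≤ (d:ℝ)/lamX + ((d:ℝ)-1) * s := by
              have hc : ((d-1:ℕ):ℝ) = (d:ℝ)-1 := by
                rw [Nat.cast_sub (by omega : 1 ≤ d)]
                push_cast
                ring
              rw [hc]
              linarith [hl1]
      have h2s : (0:ℝ) < 2*s := by positivity
      rw [hn]
      rw [← (mul_le_mul_iff_left₀ h2s)]
      calc (∑ j ∈ Finset.univ.erase (iw z), ((z j).natAbs : ℝ)) * (2*s)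
          ≤ (d:ℝ)/lamX + ((d:ℝ)-1) * s := hsum2
        _ = ((d:ℝ)/(2*s*lamX) + ((d:ℝ)-1)/2) * (2*s) := by
            field_simp
  have hcardT : (T.card : ℝ) ≤ (2*d) * ((1/xx) ^ n * ((1+xx)/(1-xx)) ^ (d-1)) := by
    have h8 : T.card ≤ ∑ i : Fin d, ∑ σ : Bool, (W i).card := by
      rw [hT]
      calc (Finset.univ.biUnion _).card ≤ ∑ i : Fin d, (Finset.univ.biUnion
          (fun σ : Bool => (W i).image (fun w => (i, σ, w)))).card := Finset.card_biUnion_le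
        _ ≤ ∑ i : Fin d, ∑ σ : Bool, ((W i).image (fun w => (i, σ, w))).card := by
            exact Finset.sum_le_sum fun i _ => Finset.card_biUnion_le
        _ ≤ ∑ i : Fin d, ∑ σ : Bool, (W i).card := by
            exact Finset.sum_le_sum fun i _ => Finset.sum_le_sum fun σ _ =>
              Finset.card_image_le
    have h9 : ∀ i : Fin d, ((W i).card : ℝ) ≤ (1/xx) ^ n * ((1+xx)/(1-xx)) ^ (d-1) := by
      intro i
      rw [hW]
      exact count_bound M i n hn0 xx hxx0 hxx1
    calc (T.card : ℝ) ≤ ∑ i : Fin d, ∑ σ : Bool, ((W i).card : ℝ) := by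
          exact_mod_cast h8
      _ ≤ ∑ i : Fin d, ∑ _σ : Bool, ((1/xx) ^ n * ((1+xx)/(1-xx)) ^ (d-1)) := by
          exact Finset.sum_le_sum fun i _ => Finset.sum_le_sum fun σ _ => h9 i
      _ = (2*d) * ((1/xx) ^ n * ((1+xx)/(1-xx)) ^ (d-1)) := by
          simp [Finset.sum_const, Finset.card_univ]
          ring
  have himgcard : ((Z.image g).card : ℝ) ≤ (2*d) * ((1/xx) ^ n * ((1+xx)/(1-xx)) ^ (d-1)) := by
    calc ((Z.image g).card : ℝ) ≤ (T.card : ℝ) := by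
          exact_mod_cast Finset.card_le_card himgT
      _ ≤ _ := hcardT
  calc (Z.card : ℝ) ≤ ((2*d+1) : ℝ) * ((Z.image g).card : ℝ) := by
        exact_mod_cast hcard1
    _ ≤ ((2*d+1):ℝ) * ((2*d) * ((1/xx) ^ n * ((1+xx)/(1-xx)) ^ (d-1))) := by
        apply mul_le_mul_of_nonneg_left himgcard (by positivity)
    _ = (2*(d:ℝ)+1) * (2*(d:ℝ)) * ((1/xx) ^ n * ((1+xx)/(1-xx)) ^ (d-1)) := by ring



theorem poly_helper (c : ℝ) (d₀ : ℕ) (h1 : 1 ≤ d₀) (hc0 : 0 < c)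
    (hc : ((d₀:ℝ)+1)^2 ≤ c * (d₀:ℝ)^2)
    (hbase : 4*(d₀:ℝ)*(2*(d₀:ℝ)+1) ≤ c^(d₀-1)) :
    ∀ d : ℕ, d₀ ≤ d → 4*(d:ℝ)*(2*(d:ℝ)+1) ≤ c^(d-1) := by
  intro d hd
  induction d, hd using Nat.le_induction with
  | base => exact hbase
  | succ d hd ih =>
    have hd1 : 1 ≤ d := le_trans h1 hd
    have hdR : (1:ℝ) ≤ (d:ℝ) := by exact_mod_cast hd1
    have hd₀R : (1:ℝ) ≤ (d₀:ℝ) := by exact_mod_cast h1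
    have hddR : (d₀:ℝ) ≤ (d:ℝ) := by exact_mod_cast hd
    have hmono : ((d:ℝ)+1)^2 ≤ c * (d:ℝ)^2 := by
      have key : ((d:ℝ)+1)^2 * (d₀:ℝ)^2 ≤ ((d₀:ℝ)+1)^2 * (d:ℝ)^2 := by
        have h2 : ((d:ℝ)+1) * (d₀:ℝ) ≤ ((d₀:ℝ)+1) * (d:ℝ) := by nlinarith
        have h3 : (0:ℝ) ≤ ((d:ℝ)+1) * (d₀:ℝ) := by positivity
        calc ((d:ℝ)+1)^2 * (d₀:ℝ)^2 = (((d:ℝ)+1) * (d₀:ℝ))^2 := by ring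
          _ ≤ (((d₀:ℝ)+1) * (d:ℝ))^2 := by
              apply pow_le_pow_left₀ h3 h2
          _ = ((d₀:ℝ)+1)^2 * (d:ℝ)^2 := by ring
      have h4 : ((d₀:ℝ)+1)^2 * (d:ℝ)^2 ≤ c * (d₀:ℝ)^2 * (d:ℝ)^2 := by
        apply mul_le_mul_of_nonneg_right hc (by positivity)
      have h5 : (0:ℝ) < (d₀:ℝ)^2 := by positivity
      nlinarith [key, h4]
    have hstep : 4*((d:ℝ)+1)*(2*((d:ℝ)+1)+1) ≤ c * (4*(d:ℝ)*(2*(d:ℝ)+1)) := by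
      have h6 : ((d:ℝ)+1)^2 * ((d:ℝ)*(2*(d:ℝ)+1)) ≥ (d:ℝ)^2 * (((d:ℝ)+1)*(2*(d:ℝ)+3)) := by
        nlinarith [hdR]
      have h7 : (0:ℝ) < (d:ℝ)^2 := by positivity
      have h8 : (0:ℝ) ≤ (d:ℝ)*(2*(d:ℝ)+1) := by nlinarith
      nlinarith [hmono, h6, mul_le_mul_of_nonneg_right hmono h8]
    have hpow : c^(d+1-1) = c * c^(d-1) := by
      have : d + 1 - 1 = (d-1) + 1 := by omega
      rw [this, pow_succ]
      ring
    rw [hpow]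
    push_cast
    calc 4*((d:ℝ)+1)*(2*((d:ℝ)+1)+1) ≤ c * (4*(d:ℝ)*(2*(d:ℝ)+1)) := hstep
      _ ≤ c * c^(d-1) := mul_le_mul_of_nonneg_left ih (le_of_lt hc0)
    
theorem combine_pow (c B R : ℝ) (hB : 0 ≤ B) (hc0 : 0 ≤ c) (hcB : c * B ≤ R)
    (d : ℕ) (hpoly : 4*(d:ℝ)*(2*(d:ℝ)+1) ≤ c^(d-1)) :
    4*(d:ℝ)*(2*(d:ℝ)+1) * B^(d-1) ≤ R^(d-1) := by
  calc 4*(d:ℝ)*(2*(d:ℝ)+1) * B^(d-1) ≤ c^(d-1) * B^(d-1) :=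
        mul_le_mul_of_nonneg_right hpoly (by positivity)
    _ = (c*B)^(d-1) := (mul_pow c B (d-1)).symm
    _ ≤ R^(d-1) := pow_le_pow_left₀ (by positivity) hcB _

theorem rpow_two_root_le (P : ℕ) (hP : 1 ≤ P) : (2:ℝ)^((1:ℝ)/(P:ℝ)) ≤ 1 + 1/(P:ℝ) := by
  have hPne : (P:ℝ) ≠ 0 := by positivity
  have hP0 : (0:ℝ) < (P:ℝ) := by positivity
  have h1 : (2:ℝ) ≤ (1 + 1/(P:ℝ))^(P:ℕ) := by
    have hpos : (0:ℝ) < 1/(P:ℝ) := by positivity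
    have h2 := one_add_mul_le_pow (by linarith : (-2:ℝ) ≤ 1/(P:ℝ)) P
    have h3 : (P:ℝ) * (1/(P:ℝ)) = 1 := by field_simp
    rw [h3] at h2
    linarith
  have hbase0 : (0:ℝ) ≤ 1 + 1/(P:ℝ) := by positivity
  have h2 : ((2:ℝ))^((1:ℝ)/(P:ℝ)) ≤ ((1 + 1/(P:ℝ))^(P:ℕ))^((1:ℝ)/(P:ℝ)) := by
    apply Real.rpow_le_rpow (by norm_num) h1 (by positivity)
  rwa [← Real.rpow_natCast (1+1/(P:ℝ)) P, ← Real.rpow_mul hbase0,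
    mul_one_div, div_self hPne, Real.rpow_one] at h2

theorem four_rpow_le (P d : ℕ) (hP : 1 ≤ P) (t : ℝ) (ht : t ≤ (d:ℝ)/(2*(P:ℝ))) :
    (4:ℝ)^t ≤ (1 + 1/(P:ℝ))^d := by
  have hP0 : (0:ℝ) < (P:ℝ) := by positivity
  have h1 : (4:ℝ)^t ≤ (4:ℝ)^((d:ℝ)/(2*(P:ℝ))) :=
    Real.rpow_le_rpow_of_exponent_le (by norm_num) ht
  have h2 : (4:ℝ)^((d:ℝ)/(2*(P:ℝ))) = ((2:ℝ)^((1:ℝ)/(P:ℝ)))^(d:ℕ) := by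
    rw [show (4:ℝ) = (2:ℝ)^((2:ℕ):ℝ) by
      rw [Real.rpow_natCast]; norm_num]
    rw [← Real.rpow_natCast ((2:ℝ)^((1:ℝ)/(P:ℝ))) d]
    rw [← Real.rpow_mul (by norm_num : (0:ℝ) ≤ 2), ← Real.rpow_mul (by norm_num : (0:ℝ) ≤ 2)]
    congr 1
    push_cast
    field_simp
  rw [h2] at h1
  calc (4:ℝ)^t ≤ ((2:ℝ)^((1:ℝ)/(P:ℝ)))^(d:ℕ) := h1
    _ ≤ (1 + 1/(P:ℝ))^d :=
        pow_le_pow_left₀ (Real.rpow_nonneg (by norm_num) _) (rpow_two_root_le P hP) d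

theorem pow_d_le_sq (a : ℝ) (ha : 1 ≤ a) (d : ℕ) (hd : 2 ≤ d) :
    a^d ≤ (a^2)^(d-1) := by
  rw [← pow_mul]
  apply pow_le_pow_right₀ ha
  omega

theorem lo_numeric (K : ℕ) (hK3 : 3 ≤ K) (hK13 : K ≤ 13) (d : ℕ) (hd : 2^(14-K) < d) :
    4*(d:ℝ)*(2*(d:ℝ)+1) * ((1 + 1/((2^(14-K):ℕ):ℝ))^2 * (10/3))^(d-1)
      ≤ ((2:ℝ)^(K-1))^(d-1) := by
  interval_cases K
  · -- K = 3, P = 2048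
    have hd' : 2049 ≤ d := by norm_num at hd; omega
    have hbase : 4*(2049:ℝ)*(2*(2049:ℝ)+1) ≤ ((599:ℝ)/500)^(2049-1) := by
      have h8 : (4:ℝ) ≤ ((599:ℝ)/500)^8 := by norm_num
      have e1 : ((599:ℝ)/500)^(2049-1) = (((599:ℝ)/500)^8)^256 := by
        rw [← pow_mul]
      rw [e1]
      calc (4:ℝ)*2049*(2*(2049:ℝ)+1) ≤ (4:ℝ)^13 := by norm_num
        _ ≤ (4:ℝ)^256 := pow_le_pow_right₀ (by norm_num) (by norm_num)
        _ ≤ (((599:ℝ)/500)^8)^256 := pow_le_pow_left₀ (by norm_num) h8 _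
    exact combine_pow (599/500) _ _ (by positivity) (by norm_num) (by norm_num) d
      (poly_helper (599/500) 2049 (by norm_num) (by norm_num) (by norm_num) hbase d hd')
  · -- K = 4, P = 1024
    have hd' : 1025 ≤ d := by norm_num at hd; omega
    have hbase : 4*(1025:ℝ)*(2*(1025:ℝ)+1) ≤ ((239:ℝ)/100)^(1025-1) := by
      calc 4*(1025:ℝ)*(2*(1025:ℝ)+1) ≤ ((239:ℝ)/100)^19 := by norm_num
        _ ≤ ((239:ℝ)/100)^(1025-1) := pow_le_pow_right₀ (by norm_num) (by norm_num)
    exact combine_pow (239/100) _ _ (by positivity) (by norm_num) (by norm_num) d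
      (poly_helper (239/100) 1025 (by norm_num) (by norm_num) (by norm_num) hbase d hd')
  · -- K = 5, P = 512
    have hd' : 513 ≤ d := by norm_num at hd; omega
    have hbase : 4*(513:ℝ)*(2*(513:ℝ)+1) ≤ ((19:ℝ)/4)^(513-1) := by
      calc 4*(513:ℝ)*(2*(513:ℝ)+1) ≤ ((19:ℝ)/4)^10 := by norm_num
        _ ≤ ((19:ℝ)/4)^(513-1) := pow_le_pow_right₀ (by norm_num) (by norm_num)
    exact combine_pow (19/4) _ _ (by positivity) (by norm_num) (by norm_num) d
      (poly_helper (19/4) 513 (by norm_num) (by norm_num) (by norm_num) hbase d hd')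
  · -- K = 6, P = 256
    have hd' : 257 ≤ d := by norm_num at hd; omega
    have hbase : 4*(257:ℝ)*(2*(257:ℝ)+1) ≤ (9:ℝ)^(257-1) := by
      calc 4*(257:ℝ)*(2*(257:ℝ)+1) ≤ (9:ℝ)^7 := by norm_num
        _ ≤ (9:ℝ)^(257-1) := pow_le_pow_right₀ (by norm_num) (by norm_num)
    exact combine_pow 9 _ _ (by positivity) (by norm_num) (by norm_num) d
      (poly_helper 9 257 (by norm_num) (by norm_num) (by norm_num) hbase d hd')
  · -- K = 7, P = 128
    have hd' : 129 ≤ d := by norm_num at hd; omega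
    have hbase : 4*(129:ℝ)*(2*(129:ℝ)+1) ≤ (18:ℝ)^(129-1) := by
      calc 4*(129:ℝ)*(2*(129:ℝ)+1) ≤ (18:ℝ)^5 := by norm_num
        _ ≤ (18:ℝ)^(129-1) := pow_le_pow_right₀ (by norm_num) (by norm_num)
    exact combine_pow 18 _ _ (by positivity) (by norm_num) (by norm_num) d
      (poly_helper 18 129 (by norm_num) (by norm_num) (by norm_num) hbase d hd')
  · -- K = 8, P = 64
    have hd' : 65 ≤ d := by norm_num at hd; omega
    have hbase : 4*(65:ℝ)*(2*(65:ℝ)+1) ≤ (37:ℝ)^(65-1) := by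
      calc 4*(65:ℝ)*(2*(65:ℝ)+1) ≤ (37:ℝ)^3 := by norm_num
        _ ≤ (37:ℝ)^(65-1) := pow_le_pow_right₀ (by norm_num) (by norm_num)
    exact combine_pow 37 _ _ (by positivity) (by norm_num) (by norm_num) d
      (poly_helper 37 65 (by norm_num) (by norm_num) (by norm_num) hbase d hd')
  · -- K = 9, P = 32
    have hd' : 33 ≤ d := by norm_num at hd; omega
    have hbase : 4*(33:ℝ)*(2*(33:ℝ)+1) ≤ (72:ℝ)^(33-1) := by
      calc 4*(33:ℝ)*(2*(33:ℝ)+1) ≤ (72:ℝ)^3 := by norm_num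
        _ ≤ (72:ℝ)^(33-1) := pow_le_pow_right₀ (by norm_num) (by norm_num)
    exact combine_pow 72 _ _ (by positivity) (by norm_num) (by norm_num) d
      (poly_helper 72 33 (by norm_num) (by norm_num) (by norm_num) hbase d hd')
  · -- K = 10, P = 16
    have hd' : 17 ≤ d := by norm_num at hd; omega
    have hbase : 4*(17:ℝ)*(2*(17:ℝ)+1) ≤ (136:ℝ)^(17-1) := by
      calc 4*(17:ℝ)*(2*(17:ℝ)+1) ≤ (136:ℝ)^2 := by norm_num
        _ ≤ (136:ℝ)^(17-1) := pow_le_pow_right₀ (by norm_num) (by norm_num)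
    exact combine_pow 136 _ _ (by positivity) (by norm_num) (by norm_num) d
      (poly_helper 136 17 (by norm_num) (by norm_num) (by norm_num) hbase d hd')
  · -- K = 11, P = 8
    have hd' : 9 ≤ d := by norm_num at hd; omega
    have hbase : 4*(9:ℝ)*(2*(9:ℝ)+1) ≤ (242:ℝ)^(9-1) := by
      calc 4*(9:ℝ)*(2*(9:ℝ)+1) ≤ (242:ℝ)^2 := by norm_num
        _ ≤ (242:ℝ)^(9-1) := pow_le_pow_right₀ (by norm_num) (by norm_num)
    exact combine_pow 242 _ _ (by positivity) (by norm_num) (by norm_num) d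
      (poly_helper 242 9 (by norm_num) (by norm_num) (by norm_num) hbase d hd')
  · -- K = 12, P = 4
    have hd' : 5 ≤ d := by norm_num at hd; omega
    have hbase : 4*(5:ℝ)*(2*(5:ℝ)+1) ≤ (393:ℝ)^(5-1) := by
      calc 4*(5:ℝ)*(2*(5:ℝ)+1) ≤ (393:ℝ)^2 := by norm_num
        _ ≤ (393:ℝ)^(5-1) := pow_le_pow_right₀ (by norm_num) (by norm_num)
    exact combine_pow 393 _ _ (by positivity) (by norm_num) (by norm_num) d
      (poly_helper 393 5 (by norm_num) (by norm_num) (by norm_num) hbase d hd')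
  · -- K = 13, P = 2
    have hd' : 3 ≤ d := by norm_num at hd; omega
    have hbase : 4*(3:ℝ)*(2*(3:ℝ)+1) ≤ (546:ℝ)^(3-1) := by norm_num
    exact combine_pow 546 _ _ (by positivity) (by norm_num) (by norm_num) d
      (poly_helper 546 3 (by norm_num) (by norm_num) (by norm_num) hbase d hd')

theorem hi_poly (d : ℕ) (hd : 2 ≤ d) : 4*(d:ℝ)*(2*(d:ℝ)+1) ≤ (390:ℝ)^(d-1) :=
  poly_helper 390 2 (by norm_num) (by norm_num) (by norm_num) (by norm_num) d hd

theorem adaptive_bound (n : ℝ) (hn : 0 ≤ n) (r : ℕ) (hr : 1 ≤ r) :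
    ∃ xx : ℝ, 0 < xx ∧ xx < 1 ∧
      (1/xx)^n * ((1+xx)/(1-xx))^r ≤ (3*(2*(n/(r:ℝ)) + 3))^r := by
  have hrR : (0:ℝ) < (r:ℝ) := by positivity
  set q : ℕ := max 1 ⌈n/(r:ℝ)⌉₊ with hq
  have hq1 : 1 ≤ q := le_max_left _ _
  have hqR : (1:ℝ) ≤ (q:ℝ) := by exact_mod_cast hq1
  have hq0 : (0:ℝ) < (q:ℝ) := by linarith
  have hnq : n/(r:ℝ) ≤ (q:ℝ) := by
    calc n/(r:ℝ) ≤ (⌈n/(r:ℝ)⌉₊ : ℝ) := Nat.le_ceil _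
      _ ≤ (q:ℝ) := by exact_mod_cast le_max_right _ _
  have hqup : (q:ℝ) ≤ n/(r:ℝ) + 1 := by
    rcases le_or_gt (⌈n/(r:ℝ)⌉₊ : ℕ) 1 with h | h
    · have : q = 1 := by omega
      rw [this]
      have : (0:ℝ) ≤ n/(r:ℝ) := by positivity
      push_cast
      linarith
    · have hqc : q = ⌈n/(r:ℝ)⌉₊ := by omega
      rw [hqc]
      have := Nat.ceil_lt_add_one (by positivity : (0:ℝ) ≤ n/(r:ℝ))
      linarith
  refine ⟨(q:ℝ)/((q:ℝ)+1), by positivity, by rw [div_lt_one (by positivity)]; linarith, ?_⟩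
  have hinv : 1/((q:ℝ)/((q:ℝ)+1)) = 1 + 1/(q:ℝ) := by field_simp
  have hratio : (1+(q:ℝ)/((q:ℝ)+1))/(1-(q:ℝ)/((q:ℝ)+1)) = 2*(q:ℝ)+1 := by
    rw [div_eq_iff]
    · field_simp
      ring
    · have h2 : 1-(q:ℝ)/((q:ℝ)+1) = 1/((q:ℝ)+1) := by field_simp; ring
      rw [h2]
      positivity
  rw [hinv, hratio]
  have h1 : (1 + 1/(q:ℝ))^n ≤ Real.exp (n/(q:ℝ)) := by
    have hb : 1 + 1/(q:ℝ) ≤ Real.exp (1/(q:ℝ)) := by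
      have := Real.add_one_le_exp (1/(q:ℝ))
      linarith
    calc (1 + 1/(q:ℝ))^n ≤ (Real.exp (1/(q:ℝ)))^n :=
          Real.rpow_le_rpow (by positivity) hb hn
      _ = Real.exp (n/(q:ℝ)) := by
          rw [← Real.exp_one_rpow (1/(q:ℝ)), ← Real.rpow_mul (by positivity)]
          rw [Real.exp_one_rpow]
          congr 1
          field_simp
  have h2 : Real.exp (n/(q:ℝ)) ≤ (3:ℝ)^r := by
    have hnq' : n/(q:ℝ) ≤ (r:ℝ) := by
      rw [div_le_iff₀ hq0]
      calc n = (n/(r:ℝ)) * (r:ℝ) := by field_simp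
        _ ≤ (q:ℝ) * (r:ℝ) := mul_le_mul_of_nonneg_right hnq (le_of_lt hrR)
        _ = (r:ℝ) * (q:ℝ) := by ring
    calc Real.exp (n/(q:ℝ)) ≤ Real.exp (r:ℝ) := Real.exp_le_exp.2 hnq'
      _ = (Real.exp 1)^r := by
          rw [← Real.exp_one_rpow ((r:ℕ):ℝ), Real.rpow_natCast]
      _ ≤ (3:ℝ)^r := by
          apply pow_le_pow_left₀ (le_of_lt (Real.exp_pos 1))
          have := Real.exp_one_lt_d9
          linarith
  have h3 : (2*(q:ℝ)+1)^r ≤ (2*(n/(r:ℝ))+3)^r := by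
    apply pow_le_pow_left₀ (by positivity)
    linarith
  calc (1 + 1/(q:ℝ))^n * (2*(q:ℝ)+1)^r
      ≤ (3:ℝ)^r * (2*(n/(r:ℝ))+3)^r := by
        apply mul_le_mul (le_trans h1 h2) h3 (by positivity) (by positivity)
    _ = (3*(2*(n/(r:ℝ)) + 3))^r := (mul_pow _ _ _).symm


set_option maxHeartbeats 1000000 in
/-- There is a universal constant `C > 0` such that for all `d ≥ 2`, all
symmetric norms `‖·‖_X`, `‖·‖_Y` on `ℝ^d` with normalized standard basis vectors, and all
`k ≥ 2d + ⌈log₂ d⌉ − 1`,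
`e_k(S_X, B_Y) ≤ C · 2^{−k/(d−1)} · λ_Y(d−1)/λ_X(d−1)`. -/
theorem entropy_symm_upper_large :
    ∃ C : ℝ, 0 < C ∧ ∀ (d : ℕ), 2 ≤ d → ∀ nX nY : (Fin d → ℝ) → ℝ,
      IsSymmNorm nX → IsSymmNorm nY →
      (∀ i : Fin d, nX (Pi.single i 1) = 1) →
      (∀ i : Fin d, nY (Pi.single i 1) = 1) →
      ∀ k : ℕ, 2 * d + Nat.clog 2 d - 1 ≤ k →
        entropyNumber {x | nX x = 1} {x | nY x ≤ 1} k ≤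
          C * 2 ^ (-(k : ℝ) / ((d : ℝ) - 1)) * (lam nY (d - 1) / lam nX (d - 1)) := by
  classical
  refine ⟨32768, by norm_num, ?_⟩
  intro d hd nX nY hfX hfY hbX hbY k hk
  have hd0 : 0 < d := by omega
  have hr1 : 1 ≤ d - 1 := by omega
  have hrpos : (0:ℝ) < ((d-1:ℕ):ℝ) := by
    have : (1:ℝ) ≤ ((d-1:ℕ):ℝ) := by exact_mod_cast hr1
    linarith
  have hcast : ((d-1:ℕ):ℝ) = (d:ℝ) - 1 := by
    rw [Nat.cast_sub (by omega : 1 ≤ d)]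
    push_cast
    ring
  -- lambda facts
  have hlamX'1 : 1 ≤ lam nX (d-1) := lam_ge_one hfX hbX hr1 hd0
  have hlamX1 : 1 ≤ lam nX d := lam_ge_one hfX hbX (by omega) hd0
  have hlamY'1 : 1 ≤ lam nY (d-1) := lam_ge_one hfY hbY hr1 hd0
  have hlamY1 : 1 ≤ lam nY d := lam_ge_one hfY hbY (by omega) hd0
  have hX'X : lam nX (d-1) ≤ lam nX d := lam_mono hfX (by omega)
  have hY'Y : lam nY (d-1) ≤ lam nY d := lam_mono hfY (by omega)
  have hlamXd : lam nX d ≤ (d:ℝ) := lam_le_d hfX hbX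
  have hY2 : lam nY d ≤ 2 * lam nY (d-1) := lam_pred hfY hbY hd
  have hlamX'0 : (0:ℝ) < lam nX (d-1) := by linarith
  have hlamY'0 : (0:ℝ) < lam nY (d-1) := by linarith
  have hlamX0 : (0:ℝ) < lam nX d := by linarith
  have hlamY0 : (0:ℝ) < lam nY d := by linarith
  set ε : ℝ := 32768 * 2 ^ (-(k : ℝ) / ((d : ℝ) - 1)) * (lam nY (d - 1) / lam nX (d - 1))
    with hεdef
  have hε0 : 0 < ε := by
    rw [hεdef]
    have h1 : (0:ℝ) < 2 ^ (-(k : ℝ) / ((d : ℝ) - 1)) := Real.rpow_pos_of_pos (by norm_num) _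
    positivity
  -- m
  set m : ℝ := 2 ^ ((k:ℝ)/((d-1:ℕ):ℝ)) with hm
  have hm0 : 0 < m := Real.rpow_pos_of_pos (by norm_num) _
  have hmr : m ^ (d-1) = 2 ^ k := by
    rw [hm, ← Real.rpow_natCast (2 ^ ((k:ℝ)/((d-1:ℕ):ℝ))) (d-1),
      ← Real.rpow_mul (by norm_num), div_mul_cancel₀ _ (ne_of_gt hrpos),
      Real.rpow_natCast]
  have hεm : ε = 32768 * (lam nY (d - 1) / lam nX (d - 1)) / m := by
    rw [hεdef, hm]
    rw [show -(k : ℝ) / ((d : ℝ) - 1) = -((k:ℝ)/((d-1:ℕ):ℝ)) by rw [hcast]; ring]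
    rw [Real.rpow_neg (by norm_num)]
    field_simp
  have hclog : 1 ≤ Nat.clog 2 d := by
    have := Nat.clog_pos (by norm_num : 1 < 2) (by omega : 1 < d)
    omega
  have hk2r : 2*(d-1) < k := by omega
  have hk1 : 1 ≤ k := by omega
  -- budget
  have hbudget : (2:ℝ)^k = 2 * (2:ℝ)^(k-1) := by
    rw [← pow_succ']
    congr 1
    omega
  -- reduce to membership
  apply csInf_le ⟨0, fun e he => le_of_lt he.1⟩
  refine ⟨hε0, ?_⟩
  rcases le_or_gt (lam nY d) ε with htriv | hsmall
  · -- one ball suffices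
    refine ⟨fun _ => 0, ?_⟩
    intro x hx
    rw [Set.mem_setOf_eq] at hx
    apply Set.mem_iUnion.2
    have hpos : 0 < 2^(k-1) := Nat.pow_pos (by norm_num)
    refine ⟨⟨0, hpos⟩, ?_⟩
    have hxB : nY x ≤ ε := by
      have h1 : nY x ≤ 1 * lam nY d := by
        apply sn_le_sup hfY (by norm_num) _ hd0
        intro i
        rw [← hx]
        exact sn_coord hfX hbX x i
      linarith
    rw [Set.mem_vadd_set]
    refine ⟨x, ?_, by simp⟩
    rw [Set.mem_smul_set]
    refine ⟨ε⁻¹ • x, ?_, by rw [smul_inv_smul₀ (ne_of_gt hε0)]⟩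
    rw [Set.mem_setOf_eq]
    rw [sn_smul hfY, abs_of_pos (by positivity)]
    rw [inv_mul_le_iff₀ hε0]
    linarith
  · -- main construction
    set s : ℝ := ε / lam nY d with hs
    have hs0 : 0 < s := by positivity
    have hs1 : s < 1 := by
      rw [hs, div_lt_one hlamY0]
      exact hsmall
    have hεmul : ε * m = 32768 * (lam nY (d-1) / lam nX (d-1)) := by
      rw [hεm]
      field_simp
    have hslow : 32768 / (2 * m * lam nX d) ≤ s := by
      rw [hs, div_le_div_iff₀ (by positivity) hlamY0]
      have key : ε * (2*m*lam nX d) = 32768 * (lam nY (d-1) / lam nX (d-1)) * (2 * lam nX d) := by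
        calc ε * (2*m*lam nX d) = (ε*m) * (2*lam nX d) := by ring
          _ = _ := by rw [hεmul]
      rw [key]
      have h4 : (1:ℝ) ≤ lam nX d / lam nX (d-1) := by
        rw [le_div_iff₀ hlamX'0]
        linarith
      have h5 : lam nY d ≤ 2 * lam nY (d-1) * (lam nX d / lam nX (d-1)) := by
        calc lam nY d ≤ 2*lam nY (d-1) := hY2
          _ = 2*lam nY (d-1) * 1 := by ring
          _ ≤ _ := by
              apply mul_le_mul_of_nonneg_left h4 (by positivity)
      calc 32768 * lam nY d ≤ 32768 * (2 * lam nY (d-1) * (lam nX d / lam nX (d-1))) := by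
            linarith
        _ = 32768 * (lam nY (d-1) / lam nX (d-1)) * (2 * lam nX d) := by
            field_simp
    have hC2m : (32768:ℝ) < 2 * m * lam nX d := by
      have h6 := lt_of_le_of_lt hslow hs1
      rwa [div_lt_one (by positivity)] at h6
    obtain ⟨Z, hZcover, hZcard⟩ := cover_exists hd hfX hbX s hs0
    have hcount : (Z.card : ℝ) ≤ (2:ℝ)^(k-1) := by
      have htm : (d:ℝ)/(2*s*lam nX d) ≤ (d:ℝ)*m/32768 := by
        rw [div_le_div_iff₀ (by positivity) (by norm_num)]
        have h6 : (32768:ℝ) ≤ m * (2*s*lam nX d) := by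
          have h7 := (div_le_iff₀ (by positivity : (0:ℝ) < 2*m*lam nX d)).1 hslow
          nlinarith [h7]
        nlinarith [h6, (show (0:ℝ) ≤ (d:ℝ) by positivity)]
      rcases lt_or_ge m ((2:ℝ)^(13:ℕ)) with hlo | hhi
      · -- LO case
        set K : ℕ := (k + (d-1) - 1)/(d-1) with hK
        have hdm := Nat.div_add_mod (k + (d-1) - 1) (d-1)
        have hmlt : (k + (d-1) - 1) % (d-1) < d-1 := Nat.mod_lt _ (by omega)
        rw [← hK] at hdm
        obtain ⟨E, hE⟩ : ∃ E, E = (d-1) * K := ⟨_, rfl⟩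
        obtain ⟨R2, hR2⟩ : ∃ R2, R2 = (k + (d-1) - 1) % (d-1) := ⟨_, rfl⟩
        rw [← hE, ← hR2] at hdm
        rw [← hR2] at hmlt
        have hKlow : k ≤ K * (d-1) := by
          rw [Nat.mul_comm, ← hE]
          omega
        have hKup : K * (d-1) < k + (d-1) := by
          rw [Nat.mul_comm, ← hE]
          omega
        have hK3 : 3 ≤ K := by
          by_contra hcon
          push_neg at hcon
          have h10 : K * (d-1) ≤ 2 * (d-1) := by
            apply Nat.mul_le_mul_right
            omega
          exact lt_irrefl _ (lt_of_lt_of_le hk2r (le_trans hKlow h10))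
        have hmK : m ≤ (2:ℝ)^(K:ℕ) := by
          rw [hm, show ((2:ℝ)^(K:ℕ)) = (2:ℝ)^((K:ℕ):ℝ) by rw [Real.rpow_natCast]]
          apply Real.rpow_le_rpow_of_exponent_le (by norm_num)
          rw [div_le_iff₀ hrpos]
          have : (k:ℝ) ≤ ((K * (d-1) : ℕ):ℝ) := by exact_mod_cast hKlow
          push_cast at this ⊢
          linarith
        have hm2K1 : (2:ℝ)^(K-1) < m := by
          rw [hm, show ((2:ℝ)^(K-1)) = (2:ℝ)^(((K-1:ℕ)):ℝ) by rw [Real.rpow_natCast]]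
          apply Real.rpow_lt_rpow_of_exponent_lt (by norm_num)
          rw [lt_div_iff₀ hrpos]
          have h11 : (K-1) * (d-1) < k := by
            have h12 : (K-1)*(d-1) + (d-1) = K*(d-1) := by
              have h13 : K - 1 + 1 = K := by omega
              calc (K-1)*(d-1) + (d-1) = ((K-1)+1)*(d-1) := by ring
                _ = K*(d-1) := by rw [h13]
            have h14 : (K-1)*(d-1) + (d-1) < k + (d-1) := by
              rw [h12]
              exact hKup
            exact Nat.lt_of_add_lt_add_right h14
          have : (((K-1) * (d-1) : ℕ):ℝ) < (k:ℝ) := by exact_mod_cast h11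
          push_cast at this ⊢
          linarith
        have hK13 : K ≤ 13 := by
          have h10 : (2:ℝ)^(K-1) < (2:ℝ)^(13:ℕ) := lt_trans hm2K1 hlo
          have h11 : K - 1 < 13 := by
            exact_mod_cast (pow_lt_pow_iff_right₀ (by norm_num : (1:ℝ) < 2)).1 h10
          omega
        set P : ℕ := 2^(14-K) with hP
        have hP1 : 1 ≤ P := Nat.one_le_two_pow
        have hP0R : (0:ℝ) < (P:ℝ) := by
          have : (1:ℝ) ≤ (P:ℝ) := by exact_mod_cast hP1
          linarith
        have hPK : (P:ℝ) * (2:ℝ)^(K:ℕ) = 16384 := by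
          rw [hP]
          push_cast
          rw [← pow_add]
          rw [show 14 - K + K = 14 by omega]
          norm_num
        have hdP : P < d := by
          have h12 : (32768:ℝ) < 2 * (2:ℝ)^(K:ℕ) * (d:ℝ) := by
            calc (32768:ℝ) < 2*m*lam nX d := hC2m
              _ ≤ 2*(2:ℝ)^(K:ℕ)*(d:ℝ) := by
                  have hmm : 2*m ≤ 2*(2:ℝ)^(K:ℕ) := by linarith
                  apply mul_le_mul hmm hlamXd (by positivity) (by positivity)
          have h13 : (P:ℝ) < (d:ℝ) := by
            nlinarith [h12, hPK, pow_pos (show (0:ℝ)<2 by norm_num) K]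
          exact_mod_cast h13
        have hcard := hZcard (1/4) (by norm_num) (by norm_num)
        have e1 : (1:ℝ)/(1/4) = 4 := by norm_num
        have e2 : ((1:ℝ)+1/4)/((1:ℝ)-1/4) = 5/3 := by norm_num
        rw [e1, e2] at hcard
        set t : ℝ := (d:ℝ)/(2*s*lam nX d) with ht
        have ht0 : (0:ℝ) ≤ t := by positivity
        have htP : t ≤ (d:ℝ)/(2*(P:ℝ)) := by
          have h14 : (d:ℝ)*m/32768 ≤ (d:ℝ)/(2*(P:ℝ)) := by
            rw [div_le_div_iff₀ (by norm_num) (by positivity)]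
            have h15 : m * (2*(P:ℝ)) ≤ 32768 := by nlinarith [hmK, hPK, hP0R]
            nlinarith [h15, (show (0:ℝ) ≤ (d:ℝ) by positivity)]
          linarith [htm]
        have hsplit4 : (4:ℝ)^(t + ((d:ℝ)-1)/2) = (4:ℝ)^t * (4:ℝ)^(((d:ℝ)-1)/2) :=
          Real.rpow_add (by norm_num) _ _
        have h4half : (4:ℝ)^(((d:ℝ)-1)/2) = (2:ℝ)^(d-1) := by
          rw [← hcast]
          rw [show (4:ℝ) = (2:ℝ)^((2:ℕ):ℝ) by rw [Real.rpow_natCast]; norm_num]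
          rw [← Real.rpow_mul (by norm_num : (0:ℝ) ≤ 2)]
          rw [show ((2:ℕ):ℝ) * (((d-1:ℕ):ℝ)/2) = ((d-1:ℕ):ℝ) by push_cast; ring]
          rw [Real.rpow_natCast]
        have h4t : (4:ℝ)^t ≤ ((1 + 1/(P:ℝ))^2)^(d-1) := by
          calc (4:ℝ)^t ≤ (1 + 1/(P:ℝ))^d := four_rpow_le P d hP1 t htP
            _ ≤ ((1 + 1/(P:ℝ))^2)^(d-1) := by
                apply pow_d_le_sq _ _ d hd
                have : (0:ℝ) < 1/(P:ℝ) := by positivity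
                linarith
        have hchain : 2 * (Z.card:ℝ)
            ≤ 4*(d:ℝ)*(2*(d:ℝ)+1) * ((1 + 1/(P:ℝ))^2 * (10/3))^(d-1) := by
          have hB0 : (0:ℝ) ≤ (5/3:ℝ)^(d-1) := by positivity
          have hstep : (4:ℝ)^(t + ((d:ℝ)-1)/2) * (5/3)^(d-1)
              ≤ ((1 + 1/(P:ℝ))^2 * (10/3))^(d-1) := by
            rw [hsplit4, h4half]
            have h16 : (4:ℝ)^t * (2:ℝ)^(d-1) * (5/3)^(d-1)
                ≤ ((1 + 1/(P:ℝ))^2)^(d-1) * ((2:ℝ)^(d-1) * (5/3)^(d-1)) := by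
              have h17 : (0:ℝ) ≤ (2:ℝ)^(d-1) * (5/3)^(d-1) := by positivity
              calc (4:ℝ)^t * (2:ℝ)^(d-1) * (5/3)^(d-1)
                  = (4:ℝ)^t * ((2:ℝ)^(d-1) * (5/3)^(d-1)) := by ring
                _ ≤ ((1 + 1/(P:ℝ))^2)^(d-1) * ((2:ℝ)^(d-1) * (5/3)^(d-1)) :=
                    mul_le_mul_of_nonneg_right h4t h17
            calc (4:ℝ)^(t) * (2:ℝ)^(d-1) * (5/3)^(d-1)
                ≤ ((1 + 1/(P:ℝ))^2)^(d-1) * ((2:ℝ)^(d-1) * (5/3)^(d-1)) := h16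
              _ = ((1 + 1/(P:ℝ))^2)^(d-1) * ((2*(5/3):ℝ))^(d-1) := by
                  rw [← mul_pow]
              _ = ((1 + 1/(P:ℝ))^2 * (10/3))^(d-1) := by
                  rw [← mul_pow]
                  norm_num
          calc 2 * (Z.card:ℝ)
              ≤ 2 * ((2*(d:ℝ)+1) * (2*(d:ℝ)) * ((4:ℝ)^(t + ((d:ℝ)-1)/2) * (5/3)^(d-1))) := by
                linarith [hcard]
            _ = 4*(d:ℝ)*(2*(d:ℝ)+1) * ((4:ℝ)^(t + ((d:ℝ)-1)/2) * (5/3)^(d-1)) := by ring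
            _ ≤ 4*(d:ℝ)*(2*(d:ℝ)+1) * ((1 + 1/(P:ℝ))^2 * (10/3))^(d-1) := by
                apply mul_le_mul_of_nonneg_left hstep (by positivity)
        have hnum : 4*(d:ℝ)*(2*(d:ℝ)+1) * ((1 + 1/(P:ℝ))^2 * (10/3))^(d-1)
            ≤ ((2:ℝ)^(K-1))^(d-1) := by
          have := lo_numeric K hK3 hK13 d (by rw [← hP] at *; exact hdP)
          rw [← hP] at this
          exact this
        have hfin : 2 * (Z.card:ℝ) ≤ (2:ℝ)^k := by
          calc 2 * (Z.card:ℝ) ≤ ((2:ℝ)^(K-1))^(d-1) := le_trans hchain hnum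
            _ ≤ m^(d-1) := pow_le_pow_left₀ (by positivity) (le_of_lt hm2K1) _
            _ = (2:ℝ)^k := hmr
        rw [hbudget] at hfin
        linarith
      · -- HI case
        have hn0 : (0:ℝ) ≤ (d:ℝ)/(2*s*lam nX d) + ((d:ℝ)-1)/2 := by
          have h1 : (0:ℝ) ≤ (d:ℝ)/(2*s*lam nX d) := by positivity
          have h2 : (1:ℝ) ≤ (d:ℝ) := by exact_mod_cast hd0
          linarith
        obtain ⟨xx, hxx0, hxx1, hxxB⟩ :=
          adaptive_bound ((d:ℝ)/(2*s*lam nX d) + ((d:ℝ)-1)/2) hn0 (d-1) hr1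
        have hcard := hZcard xx hxx0 hxx1
        set t : ℝ := (d:ℝ)/(2*s*lam nX d) with ht
        have ht0 : (0:ℝ) ≤ t := by positivity
        have hd2r : (d:ℝ) ≤ 2*((d-1:ℕ):ℝ) := by
          rw [hcast]
          have : (2:ℝ) ≤ (d:ℝ) := by exact_mod_cast hd
          linarith
        have hqbound : 3*(2*((t + ((d:ℝ)-1)/2)/((d-1:ℕ):ℝ)) + 3) ≤ 84*m/32768 := by
          have hne' : (d:ℝ) - 1 ≠ 0 := by rw [← hcast]; exact ne_of_gt hrpos
          have hgen : ∀ a b : ℝ, b ≠ 0 → (a + b/2)/b = a/b + 1/2 := by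
            intro a b hb
            rw [add_div]
            congr 1
            rw [div_div]
            rw [div_eq_div_iff (by exact mul_ne_zero (by norm_num) hb) (by norm_num : (2:ℝ) ≠ 0)]
            ring
          have h1 : (t + ((d:ℝ)-1)/2)/((d-1:ℕ):ℝ) = t/((d-1:ℕ):ℝ) + 1/2 := by
            rw [hcast]
            exact hgen t ((d:ℝ)-1) hne'
          rw [h1]
          have h2 : t/((d-1:ℕ):ℝ) ≤ 2*m/32768 := by
            rw [div_le_iff₀ hrpos]
            calc t ≤ (d:ℝ)*m/32768 := htm
              _ ≤ (2*((d-1:ℕ):ℝ))*m/32768 := by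
                  apply (div_le_div_iff_of_pos_right (by norm_num : (0:ℝ) < 32768)).2
                  exact mul_le_mul_of_nonneg_right hd2r (le_of_lt hm0)
              _ = 2*m/32768 * ((d-1:ℕ):ℝ) := by ring
          have h3 : (12:ℝ) ≤ 72*m/32768 := by
            have : (8192:ℝ) ≤ m := by
              have := hhi
              norm_num at this ⊢
              linarith
            linarith
          linarith
        have hchain : 2 * (Z.card:ℝ) ≤ 4*(d:ℝ)*(2*(d:ℝ)+1) * (84*m/32768)^(d-1) := by
          have hstep : (1/xx)^(t + ((d:ℝ)-1)/2) * ((1+xx)/(1-xx))^(d-1)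
              ≤ (84*m/32768)^(d-1) := by
            calc (1/xx)^(t + ((d:ℝ)-1)/2) * ((1+xx)/(1-xx))^(d-1)
                ≤ (3*(2*((t + ((d:ℝ)-1)/2)/((d-1:ℕ):ℝ)) + 3))^(d-1) := hxxB
              _ ≤ (84*m/32768)^(d-1) := by
                  apply pow_le_pow_left₀ (by positivity) hqbound
          calc 2 * (Z.card:ℝ)
              ≤ 2 * ((2*(d:ℝ)+1) * (2*(d:ℝ))
                * ((1/xx)^(t + ((d:ℝ)-1)/2) * ((1+xx)/(1-xx))^(d-1))) := by
                linarith [hcard]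
            _ = 4*(d:ℝ)*(2*(d:ℝ)+1)
                * ((1/xx)^(t + ((d:ℝ)-1)/2) * ((1+xx)/(1-xx))^(d-1)) := by ring
            _ ≤ 4*(d:ℝ)*(2*(d:ℝ)+1) * (84*m/32768)^(d-1) := by
                apply mul_le_mul_of_nonneg_left hstep (by positivity)
        have hfin : 2 * (Z.card:ℝ) ≤ (2:ℝ)^k := by
          have h4 : (84*m/32768:ℝ)^(d-1) = (84/32768:ℝ)^(d-1) * m^(d-1) := by
            rw [← mul_pow]
            congr 1
            ring
          have h5 : 4*(d:ℝ)*(2*(d:ℝ)+1) * (84/32768:ℝ)^(d-1) ≤ 1 := by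
            calc 4*(d:ℝ)*(2*(d:ℝ)+1) * (84/32768:ℝ)^(d-1)
                ≤ (390:ℝ)^(d-1) * (84/32768:ℝ)^(d-1) :=
                  mul_le_mul_of_nonneg_right (hi_poly d hd) (by positivity)
              _ = ((390*84/32768):ℝ)^(d-1) := by
                  rw [← mul_pow]
                  congr 1
                  ring
              _ ≤ 1 := by
                  apply pow_le_one₀ (by norm_num) (by norm_num)
          calc 2 * (Z.card:ℝ) ≤ 4*(d:ℝ)*(2*(d:ℝ)+1) * (84*m/32768)^(d-1) := hchain
            _ = (4*(d:ℝ)*(2*(d:ℝ)+1) * (84/32768:ℝ)^(d-1)) * m^(d-1) := by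
                rw [h4]; ring
            _ ≤ 1 * m^(d-1) := by
                apply mul_le_mul_of_nonneg_right h5 (by positivity)
            _ = (2:ℝ)^k := by rw [one_mul, hmr]
        rw [hbudget] at hfin
        linarith
    -- construct the covering function
    have hcountN : Z.card ≤ 2^(k-1) := by
      have : (Z.card:ℝ) ≤ ((2^(k-1):ℕ):ℝ) := by
        rw [Nat.cast_pow]
        push_cast
        exact hcount
      exact_mod_cast this
    refine ⟨fun jj => if h : (jj:ℕ) < Z.toList.length
      then (fun j => 2*s*(((Z.toList[(jj:ℕ)]'h) j : ℤ):ℝ)) else 0, ?_⟩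
    intro x hx
    rw [Set.mem_setOf_eq] at hx
    obtain ⟨z, hzZ, hzx⟩ := hZcover x hx
    have hzmem : z ∈ Z.toList := Finset.mem_toList.2 hzZ
    obtain ⟨i, hilen, hieq⟩ := List.mem_iff_getElem.1 hzmem
    have hlenL : i < 2^(k-1) := by
      have h1 : Z.toList.length = Z.card := Finset.length_toList Z
      omega
    apply Set.mem_iUnion.2
    refine ⟨⟨i, hlenL⟩, ?_⟩
    have hcc : (if h : ((⟨i, hlenL⟩ : Fin (2^(k-1))):ℕ) < Z.toList.length
        then (fun j => 2*s*(((Z.toList[((⟨i, hlenL⟩ : Fin (2^(k-1))):ℕ)]'h) j : ℤ):ℝ)) else 0)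
        = fun j => 2*s*((z j : ℤ):ℝ) := by
      rw [dif_pos hilen]
      funext j
      rw [hieq]
    beta_reduce
    rw [hcc]
    rw [Set.mem_vadd_set]
    refine ⟨x - fun j => 2*s*((z j : ℤ):ℝ), ?_, by
      rw [vadd_eq_add]
      abel⟩
    rw [Set.mem_smul_set]
    refine ⟨ε⁻¹ • (x - fun j => 2*s*((z j : ℤ):ℝ)), ?_, by
      rw [smul_inv_smul₀ (ne_of_gt hε0)]⟩
    rw [Set.mem_setOf_eq]
    rw [sn_smul hfY, abs_of_pos (by positivity : (0:ℝ) < ε⁻¹)]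
    have hnear : nY (x - fun j => 2*s*((z j : ℤ):ℝ)) ≤ ε := by
      have h3 : nY (x - fun j => 2*s*((z j : ℤ):ℝ)) ≤ s * lam nY d := by
        apply sn_le_sup hfY (le_of_lt hs0) _ hd0
        intro j
        exact hzx j
      have h4 : s * lam nY d = ε := by
        rw [hs]
        field_simp
      linarith
    rw [inv_mul_le_iff₀ hε0]
    linarith
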